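/- arXiv:1706.07493 — 4 statements merged into one kernel-verified Lean document; each statement's English description precedes it below -/
import Mathlib

section
/- Let H be a real Hilbert space with strong Riemannian metrics g0 ∼ g1 (difference of flat maps Hilbert–Schmidt). Then A = (g1♯ ∘ g0♭)^{1/2} is well-defined, satisfies A − I Hilbert–Schmidt, and g1(Av, Aw) = g0(v,w) for all v, w ∈ H. -/
open scoped RealInnerProductSpace

open ContinuousLinearMap Filter

set_option linter.unusedSectionVars false
set_option maxHeartbeats 1000000
set_option synthInstance.maxHeartbeats 1000000

section AuxSqrt

variable {E : Type*} [NormedAddCommGroup E] [InnerProductSpace ℝ E] [CompleteSpace E]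

/-- Cauchy–Schwarz for a symmetric nonnegative operator. -/
lemma aux_cs (T : E →L[ℝ] E) (hs : ∀ v w : E, ⟪T v, w⟫ = ⟪v, T w⟫)
    (hp : ∀ v : E, 0 ≤ ⟪T v, v⟫) (v w : E) :
    ⟪T v, w⟫ ^ 2 ≤ ⟪T v, v⟫ * ⟪T w, w⟫ := by
  have key : ∀ t : ℝ, 0 ≤ ⟪T w, w⟫ * (t * t) + (2 * ⟪T v, w⟫) * t + ⟪T v, v⟫ := by
    intro t
    have h0 := hp (v + t • w)
    have hTwv : ⟪T w, v⟫ = ⟪T v, w⟫ := by rw [hs, real_inner_comm]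
    have hexp : ⟪T (v + t • w), v + t • w⟫
        = ⟪T w, w⟫ * (t * t) + (2 * ⟪T v, w⟫) * t + ⟪T v, v⟫ := by
      rw [map_add, map_smul]
      simp only [inner_add_left, inner_add_right, real_inner_smul_left, real_inner_smul_right,
        hTwv]
      ring
    linarith [hexp ▸ h0]
  have hd := discrim_le_zero key
  rw [discrim] at hd
  nlinarith [hd]

lemma aux_null (T : E →L[ℝ] E) (hs : ∀ v w : E, ⟪T v, w⟫ = ⟪v, T w⟫)
    (hp : ∀ v : E, 0 ≤ ⟪T v, v⟫) (w : E) (hw : ⟪T w, w⟫ = 0) : T w = 0 := by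
  have h := aux_cs T hs hp w (T w)
  rw [hw] at h
  have h2 : ⟪T w, T w⟫ = 0 := by nlinarith [sq_nonneg (⟪T w, T w⟫ : ℝ), hp (T w)]
  exact inner_self_eq_zero.mp h2

lemma aux_norm_le (T : E →L[ℝ] E) (hs : ∀ v w : E, ⟪T v, w⟫ = ⟪v, T w⟫)
    (hp : ∀ v : E, 0 ≤ ⟪T v, v⟫) (M : ℝ) (hM : 0 ≤ M)
    (hb : ∀ v : E, ⟪T v, v⟫ ≤ M * ‖v‖ ^ 2) : ‖T‖ ≤ M := by
  refine T.opNorm_le_bound hM fun v => ?_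
  rcases eq_or_ne (T v) 0 with h | h
  · rw [h, norm_zero]; positivity
  · have hTv : (0:ℝ) < ‖T v‖ := norm_pos_iff.mpr h
    have h1 := aux_cs T hs hp v (T v)
    have h2 : ⟪T v, T v⟫ = ‖T v‖ ^ 2 := real_inner_self_eq_norm_sq _
    have h7 : ‖T v‖ ^ 2 * ‖T v‖ ^ 2 ≤ (M * ‖v‖ ^ 2) * (M * ‖T v‖ ^ 2) := by
      calc ‖T v‖ ^ 2 * ‖T v‖ ^ 2 = ⟪T v, T v⟫ ^ 2 := by rw [h2]; ring
        _ ≤ ⟪T v, v⟫ * ⟪T (T v), T v⟫ := h1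
        _ ≤ (M * ‖v‖ ^ 2) * (M * ‖T v‖ ^ 2) :=
            mul_le_mul (hb v) (hb (T v)) (hp (T v)) (by positivity)
    have h8 : ‖T v‖ ^ 2 ≤ (M * ‖v‖) ^ 2 := by
      have h9 : ‖T v‖ ^ 2 * ‖T v‖ ^ 2 ≤ (M * ‖v‖) ^ 2 * ‖T v‖ ^ 2 := by nlinarith
      exact le_of_mul_le_mul_right h9 (by positivity)
    exact (pow_le_pow_iff_left₀ (norm_nonneg _) (by positivity) two_ne_zero).mp h8


lemma aux_inv (M : E →L[ℝ] E) (hMs : ∀ v w : E, ⟪M v, w⟫ = ⟪v, M w⟫) (c : ℝ) (hc : 0 < c)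
    (hlow : ∀ v : E, c * ‖v‖ ≤ ‖M v‖) : ∃ N : E →L[ℝ] E, N * M = 1 ∧ M * N = 1 := by
  have hker : ∀ v : E, M v = 0 → v = 0 := by
    intro v hv
    have := hlow v
    rw [hv, norm_zero] at this
    have : ‖v‖ ≤ 0 := by nlinarith [norm_nonneg v]
    exact norm_eq_zero.mp (le_antisymm this (norm_nonneg v))
  have hinj : LinearMap.ker (M : E →ₗ[ℝ] E) = ⊥ := (LinearMap.ker_eq_bot' (f := (M : E →ₗ[ℝ] E))).mpr fun v hv => hker v hv
  have hanti : AntilipschitzWith (c⁻¹).toNNReal M := by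
    refine M.antilipschitz_of_bound fun x => ?_
    have h := hlow x
    rw [Real.coe_toNNReal _ (by positivity)]
    rw [le_inv_mul_iff₀ hc]
    exact h
  have hclosed : IsClosed (LinearMap.range (M : E →ₗ[ℝ] E) : Set E) := by
    have := hanti.isClosed_range M.uniformContinuous
    simpa [Set.range, LinearMap.coe_range] using this
  haveI : CompleteSpace (LinearMap.range (M : E →ₗ[ℝ] E)) := hclosed.completeSpace_coe
  have hsurj : LinearMap.range (M : E →ₗ[ℝ] E) = ⊤ := by
    rw [← Submodule.orthogonal_eq_bot_iff]
    rw [Submodule.eq_bot_iff]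
    intro x hx
    rw [Submodule.mem_orthogonal] at hx
    have hMx : M x = 0 := by
      have h1 : ∀ y : E, ⟪y, M x⟫ = 0 := by
        intro y
        rw [← hMs]
        exact hx (M y) (LinearMap.mem_range_self _ y)
      have := h1 (M x)
      exact inner_self_eq_zero.mp (by rwa [real_inner_comm] at this)
    exact hker x hMx
  let e := ContinuousLinearEquiv.ofBijective M hinj hsurj
  have he : ∀ v : E, e v = M v := fun v => rfl
  refine ⟨(e.symm : E →L[ℝ] E), ?_, ?_⟩
  · ext v
    simp only [ContinuousLinearMap.mul_apply, ContinuousLinearMap.one_apply, ContinuousLinearEquiv.coe_coe]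
    rw [← he]
    exact e.symm_apply_apply v
  · ext v
    simp only [ContinuousLinearMap.mul_apply, ContinuousLinearMap.one_apply, ContinuousLinearEquiv.coe_coe]
    conv_lhs => rw [← he (e.symm v)]
    exact e.apply_symm_apply v


lemma aux_step {A : Type*} [Ring A] [Module ℝ A] (Dd a b : A)
    (ha : a = (2⁻¹ : ℝ) • (Dd + b * b)) :
    (2⁻¹ : ℝ) • (Dd + a * a) - a = (2⁻¹ : ℝ) • (a * (a - b) + (a - b) * b) := by
  have e1 : (2⁻¹ : ℝ) • (Dd + a * a) - a
      = (2⁻¹ : ℝ) • (Dd + a * a) - (2⁻¹ : ℝ) • (Dd + b * b) := by rw [← ha]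
  rw [e1, ← smul_sub]
  congr 1
  noncomm_ring

lemma aux_sqrt (B : E →L[ℝ] E) (hs : ∀ v w : E, ⟪B v, w⟫ = ⟪v, B w⟫)
    (hp : ∀ v : E, 0 ≤ ⟪B v, v⟫) :
    ∃ R : E →L[ℝ] E, (∀ v w : E, ⟪R v, w⟫ = ⟪v, R w⟫) ∧ (∀ v : E, 0 ≤ ⟪R v, v⟫) ∧
      R * R = B ∧ ∀ S : E →L[ℝ] E, S * B = B * S → S * R = R * S := by
  set lam : ℝ := ‖B‖ + 1 with hlam
  have hlam0 : (0:ℝ) < lam := by positivity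
  set D : E →L[ℝ] E := 1 - lam⁻¹ • B with hDdef
  have hDapp : ∀ v : E, D v = v - lam⁻¹ • B v := fun v => rfl
  have hDs : ∀ v w : E, ⟪D v, w⟫ = ⟪v, D w⟫ := by
    intro v w
    simp only [hDapp, inner_sub_left, inner_sub_right, real_inner_smul_left,
      real_inner_smul_right, hs v w]
  have hDinner : ∀ v : E, ⟪D v, v⟫ = ‖v‖ ^ 2 - lam⁻¹ * ⟪B v, v⟫ := by
    intro v
    rw [hDapp, inner_sub_left, real_inner_smul_left, real_inner_self_eq_norm_sq]
  have hBvv : ∀ v : E, ⟪B v, v⟫ ≤ lam * ‖v‖ ^ 2 := by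
    intro v
    have h1 : ⟪B v, v⟫ ≤ ‖B v‖ * ‖v‖ := real_inner_le_norm _ _
    have h2 : ‖B v‖ ≤ ‖B‖ * ‖v‖ := B.le_opNorm v
    nlinarith [norm_nonneg v, norm_nonneg (B v), norm_nonneg B]
  have hDp : ∀ v : E, 0 ≤ ⟪D v, v⟫ := by
    intro v
    rw [hDinner]
    have := hBvv v
    have h3 : lam⁻¹ * ⟪B v, v⟫ ≤ lam⁻¹ * (lam * ‖v‖ ^ 2) :=
      mul_le_mul_of_nonneg_left this (by positivity)
    rw [← mul_assoc, inv_mul_cancel₀ hlam0.ne', one_mul] at h3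
    linarith
  have hDle : ∀ v : E, ⟪D v, v⟫ ≤ 1 * ‖v‖ ^ 2 := by
    intro v
    rw [hDinner]
    have h4 : 0 ≤ lam⁻¹ * ⟪B v, v⟫ := mul_nonneg (by positivity) (hp v)
    linarith
  have hDnorm : ‖D‖ ≤ 1 := aux_norm_le D hDs hDp 1 one_pos.le hDle
  -- the iteration
  let Y : ℕ → E →L[ℝ] E := fun n => Nat.rec 0 (fun _ Yn => (2⁻¹ : ℝ) • (D + Yn * Yn)) n
  let y : ℕ → ℝ := fun n => Nat.rec 0 (fun _ t => (1 + t ^ 2) / 2) n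
  have hY0 : Y 0 = 0 := rfl
  have hYs : ∀ n, Y (n + 1) = (2⁻¹ : ℝ) • (D + Y n * Y n) := fun n => rfl
  have hy0 : y 0 = 0 := rfl
  have hys : ∀ n, y (n + 1) = (1 + y n ^ 2) / 2 := fun n => rfl
  have hy01 : ∀ n, 0 ≤ y n ∧ y n ≤ 1 := by
    intro n
    induction n with
    | zero => rw [hy0]; norm_num
    | succ n ih => rw [hys]; constructor <;> nlinarith [ih.1, ih.2]
  have hYsym : ∀ n, ∀ v w : E, ⟪Y n v, w⟫ = ⟪v, Y n w⟫ := by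
    intro n
    induction n with
    | zero => intro v w; rw [hY0]; simp
    | succ n ih =>
      intro v w
      rw [hYs]
      simp only [smul_apply, add_apply, ContinuousLinearMap.mul_apply, inner_smul_left, inner_smul_right,
        inner_add_left, inner_add_right, RCLike.star_def, conj_trivial]
      rw [hDs v w, ih (Y n v) w, ih v (Y n w)]
  have hYn : ∀ n, ‖Y n‖ ≤ y n := by
    intro n
    induction n with
    | zero => rw [hY0, hy0]; simp
    | succ n ih =>
      rw [hYs, hys]
      calc ‖(2⁻¹ : ℝ) • (D + Y n * Y n)‖ = 2⁻¹ * ‖D + Y n * Y n‖ := by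
            rw [norm_smul (2⁻¹:ℝ) (D + Y n * Y n)]; norm_num
        _ ≤ 2⁻¹ * (‖D‖ + ‖Y n‖ * ‖Y n‖) := by
            have := norm_add_le D (Y n * Y n)
            have := norm_mul_le (Y n) (Y n)
            nlinarith
        _ ≤ (1 + y n ^ 2) / 2 := by nlinarith [norm_nonneg (Y n), (hy01 n).1]
  have hdiff : ∀ n, ‖Y (n + 1) - Y n‖ ≤ y (n + 1) - y n := by
    intro n
    induction n with
    | zero =>
      rw [hYs, hY0, hys, hy0]
      simp only [zero_mul, mul_zero, add_zero, sub_zero]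
      rw [norm_smul (2⁻¹:ℝ) D]
      simp only [norm_inv, Real.norm_ofNat]
      nlinarith [hDnorm, norm_nonneg D]
    | succ n ih =>
      have key : Y (n + 1 + 1) - Y (n + 1)
          = (2⁻¹ : ℝ) • (Y (n+1) * (Y (n+1) - Y n) + (Y (n+1) - Y n) * Y n) := by
        rw [hYs (n+1)]
        exact aux_step D (Y (n+1)) (Y n) (hYs n)
      rw [key]
      have hd0 : (0:ℝ) ≤ y (n+1) - y n := le_trans (norm_nonneg _) ih
      calc ‖(2⁻¹ : ℝ) • (Y (n+1) * (Y (n+1) - Y n) + (Y (n+1) - Y n) * Y n)‖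
          = 2⁻¹ * ‖Y (n+1) * (Y (n+1) - Y n) + (Y (n+1) - Y n) * Y n‖ := by
            rw [norm_smul (2⁻¹:ℝ) (Y (n+1) * (Y (n+1) - Y n) + (Y (n+1) - Y n) * Y n)]; norm_num
        _ ≤ 2⁻¹ * (‖Y (n+1)‖ * ‖Y (n+1) - Y n‖ + ‖Y (n+1) - Y n‖ * ‖Y n‖) := by
            have h1 := norm_add_le (Y (n+1) * (Y (n+1) - Y n)) ((Y (n+1) - Y n) * Y n)
            have h2 := norm_mul_le (Y (n+1)) (Y (n+1) - Y n)
            have h3 := norm_mul_le (Y (n+1) - Y n) (Y n)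
            nlinarith
        _ ≤ 2⁻¹ * (y (n+1) * (y (n+1) - y n) + (y (n+1) - y n) * y n) := by
            have h4 : ‖Y (n+1)‖ * ‖Y (n+1) - Y n‖ ≤ y (n+1) * (y (n+1) - y n) :=
              mul_le_mul (hYn (n+1)) ih (norm_nonneg _) (hy01 (n+1)).1
            have h5 : ‖Y (n+1) - Y n‖ * ‖Y n‖ ≤ (y (n+1) - y n) * y n :=
              mul_le_mul ih (hYn n) (norm_nonneg _) hd0
            linarith
        _ = y (n + 2) - y (n + 1) := by rw [hys (n+1), hys n]; ring
  -- Cauchy and limit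
  have hsum : Summable (fun n => y (n + 1) - y n) := by
    apply summable_of_sum_range_le (c := 1)
    · intro n
      exact le_trans (norm_nonneg _) (hdiff n)
    · intro n
      rw [Finset.sum_range_sub (f := y)]
      rw [hy0]
      linarith [(hy01 n).2]
  have hcauchy : CauchySeq Y :=
    cauchySeq_of_dist_le_of_summable _
      (fun n => by rw [dist_eq_norm, norm_sub_rev]; exact hdiff n) hsum
  obtain ⟨Z, hZ⟩ := cauchySeq_tendsto_of_complete hcauchy
  have hshift : Tendsto (fun n => Y (n + 1)) atTop (nhds Z) :=
    hZ.comp (tendsto_add_atTop_nat 1)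
  have hmul : Tendsto (fun n => (2⁻¹ : ℝ) • (D + Y n * Y n)) atTop
      (nhds ((2⁻¹ : ℝ) • (D + Z * Z))) :=
    ((tendsto_const_nhds.add (hZ.mul hZ)).const_smul _)
  have hfix : Z = (2⁻¹ : ℝ) • (D + Z * Z) := by
    refine tendsto_nhds_unique hshift ?_
    simpa only [← hYs] using hmul
  have hZsym : ∀ v w : E, ⟪Z v, w⟫ = ⟪v, Z w⟫ := by
    intro v w
    have h1 : Tendsto (fun n => (⟪Y n v, w⟫ : ℝ)) atTop (nhds ⟪Z v, w⟫) := by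
      have happ : Tendsto (fun n => Y n v) atTop (nhds (Z v)) :=
        (ContinuousLinearMap.apply ℝ E v).continuous.continuousAt.tendsto.comp hZ
      exact happ.inner tendsto_const_nhds
    have h2 : Tendsto (fun n => (⟪Y n v, w⟫ : ℝ)) atTop (nhds ⟪v, Z w⟫) := by
      have happ : Tendsto (fun n => Y n w) atTop (nhds (Z w)) :=
        (ContinuousLinearMap.apply ℝ E w).continuous.continuousAt.tendsto.comp hZ
      have := Filter.Tendsto.inner (𝕜 := ℝ) (tendsto_const_nhds (x := v) (f := (atTop : Filter ℕ))) happ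
      simpa only [hYsym] using this
    exact tendsto_nhds_unique h1 h2
  have hZnorm : ‖Z‖ ≤ 1 := by
    refine le_of_tendsto hZ.norm (Filter.Eventually.of_forall fun n => ?_)
    exact le_trans (hYn n) (hy01 n).2
  -- the square root
  refine ⟨Real.sqrt lam • (1 - Z), ?_, ?_, ?_, ?_⟩
  · intro v w
    simp only [smul_apply, sub_apply, ContinuousLinearMap.one_apply, inner_smul_left, inner_smul_right,
      inner_sub_left, inner_sub_right, RCLike.star_def, conj_trivial, hZsym v w]
  · intro v
    simp only [smul_apply, sub_apply, ContinuousLinearMap.one_apply, inner_smul_left, inner_sub_left,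
      RCLike.star_def, conj_trivial]
    have h1 : ⟪Z v, v⟫ ≤ ‖v‖ ^ 2 := by
      have := real_inner_le_norm (Z v) v
      have := Z.le_opNorm v
      nlinarith [norm_nonneg v, norm_nonneg (Z v)]
    have h2 : ⟪v, v⟫ = ‖v‖ ^ 2 := real_inner_self_eq_norm_sq v
    have h3 : (0:ℝ) ≤ Real.sqrt lam := Real.sqrt_nonneg _
    nlinarith
  · have h2 : (2 : ℝ) • Z = D + Z * Z := by
      calc (2 : ℝ) • Z = (2 : ℝ) • ((2⁻¹ : ℝ) • (D + Z * Z)) := by conv_lhs => rw [hfix]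
        _ = D + Z * Z := by rw [smul_smul]; norm_num
    have h3 : Z * Z = (2 : ℝ) • Z - D := by rw [h2]; exact (add_sub_cancel_left _ _).symm
    have h4 : (1 - Z) * (1 - Z) = 1 - D := by
      have e : (1 - Z) * (1 - Z) = 1 - Z - Z + Z * Z := by noncomm_ring
      rw [e, h3, two_smul]
      abel
    have h5 : (1 : E →L[ℝ] E) - D = lam⁻¹ • B := by rw [hDdef]; exact sub_sub_cancel _ _
    rw [smul_mul_smul_comm, h4, h5, Real.mul_self_sqrt hlam0.le, smul_smul,
      mul_inv_cancel₀ hlam0.ne', one_smul]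
  · intro S hSB
    have hSD : S * D = D * S := by
      rw [hDdef, mul_sub, sub_mul, mul_one, one_mul, mul_smul_comm, smul_mul_assoc, hSB]
    have hSY : ∀ n, S * Y n = Y n * S := by
      intro n
      induction n with
      | zero => rw [hY0, mul_zero, zero_mul]
      | succ n ih =>
        rw [hYs]
        calc S * ((2⁻¹ : ℝ) • (D + Y n * Y n)) = (2⁻¹ : ℝ) • (S * D + S * (Y n * Y n)) := by
              rw [mul_smul_comm, mul_add]
          _ = (2⁻¹ : ℝ) • (D * S + Y n * Y n * S) := by
              rw [hSD, ← mul_assoc, ih, mul_assoc, ih, ← mul_assoc]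
          _ = ((2⁻¹ : ℝ) • (D + Y n * Y n)) * S := by
              rw [smul_mul_assoc, add_mul]
    have hSZ : S * Z = Z * S := by
      have h1 : Tendsto (fun n => S * Y n) atTop (nhds (S * Z)) := tendsto_const_nhds.mul hZ
      have h2 : Tendsto (fun n => S * Y n) atTop (nhds (Z * S)) := by
        simp only [hSY]
        exact hZ.mul tendsto_const_nhds
      exact tendsto_nhds_unique h1 h2
    rw [mul_smul_comm, smul_mul_assoc, mul_sub, sub_mul, mul_one, one_mul, hSZ]


lemma aux_unique (B R R' : E →L[ℝ] E)
    (hRs : ∀ v w : E, ⟪R v, w⟫ = ⟪v, R w⟫) (hRp : ∀ v : E, 0 ≤ ⟪R v, v⟫) (hRB : R * R = B)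
    (hcomm : ∀ S : E →L[ℝ] E, S * B = B * S → S * R = R * S)
    (hR's : ∀ v w : E, ⟪R' v, w⟫ = ⟪v, R' w⟫) (hR'p : ∀ v : E, 0 ≤ ⟪R' v, v⟫)
    (hR'B : R' * R' = B) : R' = R := by
  have hc : R' * R = R * R' := hcomm R' (by rw [← hR'B, ← mul_assoc])
  have hzero : (R + R') * (R - R') = 0 := by
    rw [add_mul, mul_sub, mul_sub, hRB, hR'B, hc]
    abel
  ext v
  have happ : ((R + R') * (R - R')) v = R (R v - R' v) + R' (R v - R' v) := by
    simp only [ContinuousLinearMap.mul_apply, sub_apply, add_apply]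
  have hw : R (R v - R' v) + R' (R v - R' v) = 0 := by
    rw [← happ, hzero]; rfl
  have hsum0 : ⟪R (R v - R' v), R v - R' v⟫ + ⟪R' (R v - R' v), R v - R' v⟫ = 0 := by
    rw [← inner_add_left, hw, inner_zero_left]
  have h1 : ⟪R (R v - R' v), R v - R' v⟫ = 0 :=
    le_antisymm (by linarith [hR'p (R v - R' v)]) (hRp _)
  have h2 : ⟪R' (R v - R' v), R v - R' v⟫ = 0 := by linarith
  have hRw : R (R v - R' v) = 0 := aux_null R hRs hRp _ h1
  have hR'w : R' (R v - R' v) = 0 := aux_null R' hR's hR'p _ h2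
  have hself : ⟪R v - R' v, R v - R' v⟫ = (0:ℝ) := by
    calc ⟪R v - R' v, R v - R' v⟫
        = ⟪R v, R v - R' v⟫ - ⟪R' v, R v - R' v⟫ := by rw [inner_sub_left]
      _ = ⟪v, R (R v - R' v)⟫ - ⟪v, R' (R v - R' v)⟫ := by rw [hRs, hR's]
      _ = 0 := by rw [hRw, hR'w, inner_zero_right]; ring
  exact (sub_eq_zero.mp (inner_self_eq_zero.mp hself)).symm

end AuxSqrt

/-- A bounded operator on a real Hilbert space is Hilbert–Schmidt if the sum of
`‖T (b i)‖ ^ 2` over some Hilbert basis is finite. -/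
def IsHilbertSchmidt {H : Type*} [NormedAddCommGroup H] [InnerProductSpace ℝ H]
    (T : H →L[ℝ] H) : Prop :=
  ∃ (ι : Type) (b : HilbertBasis ι ℝ H), Summable fun i => ‖T (b i)‖ ^ 2

/-- A strong Riemannian metric on a real Hilbert space. -/
structure IsStrongMetric {H : Type*} [NormedAddCommGroup H] [InnerProductSpace ℝ H]
    (g : H →L[ℝ] H →L[ℝ] ℝ) : Prop where
  symm : ∀ v w : H, g v w = g w v
  coercive : ∃ c : ℝ, 0 < c ∧ ∀ v : H, c * ‖v‖ ^ 2 ≤ g v v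

/-- for strong metrics `g0 ∼ g1` (Hilbert–Schmidt difference of flat maps),
the positive square root `A = (g1♯ ∘ g0♭)^{1/2}` is well-defined (it exists and is the
unique `g1`-symmetric nonnegative square root of `C = g1♯ ∘ g0♭`), satisfies
`A - I` Hilbert–Schmidt, and `g1(Av, Aw) = g0(v, w)` for all `v, w`. -/
theorem sqrt_of_metric_comparison
    {H : Type*} [NormedAddCommGroup H] [InnerProductSpace ℝ H] [CompleteSpace H]
    [TopologicalSpace.SeparableSpace H]
    (g0 g1 : H →L[ℝ] H →L[ℝ] ℝ)
    (h0 : IsStrongMetric g0) (h1 : IsStrongMetric g1)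
    (T : H →L[ℝ] H) (hT : ∀ v w : H, ⟪T v, w⟫ = g1 v w - g0 v w)
    (hHS : IsHilbertSchmidt T)
    (C : H →L[ℝ] H) (hC : ∀ v w : H, g1 (C v) w = g0 v w) :
    ∃ A : H →L[ℝ] H,
      ((∀ v w : H, g1 (A v) w = g1 v (A w)) ∧ (∀ v : H, 0 ≤ g1 (A v) v) ∧ A * A = C) ∧
      (∀ A' : H →L[ℝ] H,
        ((∀ v w : H, g1 (A' v) w = g1 v (A' w)) ∧ (∀ v : H, 0 ≤ g1 (A' v) v) ∧ A' * A' = C)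
        → A' = A) ∧
      IsHilbertSchmidt (A - 1) ∧
      (∀ v w : H, g1 (A v) (A w) = g0 v w) := by
  obtain ⟨c1, hc1, hco1⟩ := h1.coercive
  obtain ⟨c0, hc0, hco0⟩ := h0.coercive
  -- the operator G with ⟪G v, w⟫ = g1 v w
  let Gl : H →ₗ[ℝ] H :=
    { toFun := fun v => (InnerProductSpace.toDual ℝ H).symm (g1 v)
      map_add' := fun x y => by simp only [map_add]
      map_smul' := fun r x => by
        simp only [map_smul, map_smulₛₗ, RingHom.id_apply, starRingEnd_apply, star_trivial] }
  have hGlnorm : ∀ v, ‖Gl v‖ ≤ ‖g1‖ * ‖v‖ := by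
    intro v
    have : ‖Gl v‖ = ‖g1 v‖ := (InnerProductSpace.toDual ℝ H).symm.norm_map (g1 v)
    rw [this]
    exact g1.le_opNorm v
  let G : H →L[ℝ] H := LinearMap.mkContinuous Gl ‖g1‖ hGlnorm
  have hG : ∀ v w : H, ⟪G v, w⟫ = g1 v w := by
    intro v w
    exact InnerProductSpace.toDual_symm_apply
  have hGs : ∀ v w : H, ⟪G v, w⟫ = ⟪v, G w⟫ := by
    intro v w
    rw [hG, real_inner_comm, hG, h1.symm]
  have hGp : ∀ v : H, 0 ≤ ⟪G v, v⟫ := by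
    intro v
    rw [hG]
    have := hco1 v
    nlinarith [norm_nonneg v]
  obtain ⟨Rg, hRgs, hRgp, hRgG, hRgcomm⟩ := aux_sqrt G hGs hGp
  have hGRg : ∀ v : H, Rg (Rg v) = G v := by
    intro v
    rw [← hRgG]; rfl
  have hRglow : ∀ v : H, Real.sqrt c1 * ‖v‖ ≤ ‖Rg v‖ := by
    intro v
    have h1' : ‖Rg v‖ ^ 2 = ⟪G v, v⟫ := by
      rw [← real_inner_self_eq_norm_sq, hRgs, ← hGRg v, real_inner_comm]
    have h2' : c1 * ‖v‖ ^ 2 ≤ ‖Rg v‖ ^ 2 := by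
      rw [h1', hG]; exact hco1 v
    have h3' : Real.sqrt (c1 * ‖v‖ ^ 2) ≤ Real.sqrt (‖Rg v‖ ^ 2) := Real.sqrt_le_sqrt h2'
    rwa [Real.sqrt_mul hc1.le, Real.sqrt_sq (norm_nonneg v), Real.sqrt_sq (norm_nonneg _)]
      at h3'
  obtain ⟨J, hJRg, hRgJ⟩ := aux_inv Rg hRgs (Real.sqrt c1) (Real.sqrt_pos.mpr hc1) hRglow
  have hJRgv : ∀ v : H, J (Rg v) = v := fun v => by
    have := congrArg (fun X : H →L[ℝ] H => X v) hJRg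
    simpa only [ContinuousLinearMap.mul_apply, ContinuousLinearMap.one_apply] using this
  have hRgJv : ∀ v : H, Rg (J v) = v := fun v => by
    have := congrArg (fun X : H →L[ℝ] H => X v) hRgJ
    simpa only [ContinuousLinearMap.mul_apply, ContinuousLinearMap.one_apply] using this
  have hJs : ∀ v w : H, ⟪J v, w⟫ = ⟪v, J w⟫ := by
    intro v w
    calc ⟪J v, w⟫ = ⟪J v, Rg (J w)⟫ := by rw [hRgJv]
      _ = ⟪Rg (J v), J w⟫ := (hRgs _ _).symm
      _ = ⟪v, J w⟫ := by rw [hRgJv]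
  have hJG : ∀ x : H, J (G x) = Rg x := fun x => by rw [← hGRg, hJRgv]
  have hGJ : ∀ x : H, G (J x) = Rg x := fun x => by rw [← hGRg, hRgJv]
  -- the conjugated operator B
  set B : H →L[ℝ] H := Rg * C * J with hBdef
  have hBapp : ∀ v : H, B v = Rg (C (J v)) := fun v => rfl
  have hB : ∀ v w : H, ⟪B v, w⟫ = g0 (J v) (J w) := by
    intro v w
    calc ⟪B v, w⟫ = ⟪Rg (C (J v)), w⟫ := rfl
      _ = ⟪C (J v), Rg w⟫ := hRgs _ _
      _ = ⟪C (J v), G (J w)⟫ := by rw [hGJ]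
      _ = ⟪G (J w), C (J v)⟫ := real_inner_comm _ _
      _ = g1 (J w) (C (J v)) := hG _ _
      _ = g1 (C (J v)) (J w) := h1.symm _ _
      _ = g0 (J v) (J w) := hC _ _
  have hBs : ∀ v w : H, ⟪B v, w⟫ = ⟪v, B w⟫ := by
    intro v w
    rw [hB, real_inner_comm, hB, h0.symm]
  have hBp : ∀ v : H, 0 ≤ ⟪B v, v⟫ := by
    intro v
    rw [hB]
    have := hco0 (J v)
    nlinarith [norm_nonneg (J v)]
  obtain ⟨R, hRs, hRp, hRB, hRcomm⟩ := aux_sqrt B hBs hBp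
  -- the square root A
  set A : H →L[ℝ] H := J * R * Rg with hAdef
  have hAapp : ∀ v : H, A v = J (R (Rg v)) := fun v => rfl
  have hGA : ∀ v : H, G (A v) = Rg (R (Rg v)) := by
    intro v
    rw [hAapp, hGJ]
  have hAsym : ∀ v w : H, g1 (A v) w = g1 v (A w) := by
    intro v w
    calc g1 (A v) w = ⟪G (A v), w⟫ := (hG _ _).symm
      _ = ⟪Rg (R (Rg v)), w⟫ := by rw [hGA]
      _ = ⟪R (Rg v), Rg w⟫ := hRgs _ _
      _ = ⟪Rg v, R (Rg w)⟫ := hRs _ _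
      _ = ⟪Rg (R (Rg w)), v⟫ := by rw [real_inner_comm, ← hRgs]
      _ = ⟪G (A w), v⟫ := by rw [hGA]
      _ = g1 (A w) v := hG _ _
      _ = g1 v (A w) := h1.symm _ _
  have hApos : ∀ v : H, 0 ≤ g1 (A v) v := by
    intro v
    have e : g1 (A v) v = ⟪R (Rg v), Rg v⟫ := by
      calc g1 (A v) v = ⟪G (A v), v⟫ := (hG _ _).symm
        _ = ⟪Rg (R (Rg v)), v⟫ := by rw [hGA]
        _ = ⟪R (Rg v), Rg v⟫ := hRgs _ _
    rw [e]
    exact hRp (Rg v)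
  have hAA : A * A = C := by
    have e1 : A * A = J * ((R * R) * Rg) := by
      calc A * A = (J * R) * ((Rg * J) * (R * Rg)) := by rw [hAdef]; noncomm_ring
        _ = (J * R) * (R * Rg) := by rw [hRgJ, one_mul]
        _ = J * ((R * R) * Rg) := by noncomm_ring
    rw [e1, hRB, hBdef]
    calc J * ((Rg * C * J) * Rg) = (J * Rg) * (C * (J * Rg)) := by noncomm_ring
      _ = C := by rw [hJRg, one_mul, mul_one]
  refine ⟨A, ⟨hAsym, hApos, hAA⟩, ?_, ?_, ?_⟩
  · -- uniqueness
    rintro A' ⟨hA's, hA'p, hA'C⟩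
    set R' : H →L[ℝ] H := Rg * A' * J with hR'def
    have hR'app : ∀ v : H, R' v = Rg (A' (J v)) := fun v => rfl
    have hR'inner : ∀ v w : H, ⟪R' v, w⟫ = g1 (A' (J v)) (J w) := by
      intro v w
      calc ⟪R' v, w⟫ = ⟪Rg (A' (J v)), w⟫ := rfl
        _ = ⟪A' (J v), Rg w⟫ := hRgs _ _
        _ = ⟪A' (J v), G (J w)⟫ := by rw [hGJ]
        _ = ⟪G (J w), A' (J v)⟫ := real_inner_comm _ _
        _ = g1 (J w) (A' (J v)) := hG _ _
        _ = g1 (A' (J w)) (J v) := (hA's _ _).symm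
        _ = g1 (J w) (A' (J v)) := hA's _ _
        _ = g1 (A' (J v)) (J w) := h1.symm _ _
    have hR's : ∀ v w : H, ⟪R' v, w⟫ = ⟪v, R' w⟫ := by
      intro v w
      calc ⟪R' v, w⟫ = g1 (A' (J v)) (J w) := hR'inner v w
        _ = g1 (J v) (A' (J w)) := hA's _ _
        _ = g1 (A' (J w)) (J v) := h1.symm _ _
        _ = ⟪R' w, v⟫ := (hR'inner w v).symm
        _ = ⟪v, R' w⟫ := real_inner_comm _ _
    have hR'p : ∀ v : H, 0 ≤ ⟪R' v, v⟫ := by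
      intro v
      rw [hR'inner]
      exact hA'p (J v)
    have hR'B : R' * R' = B := by
      calc R' * R' = (Rg * A') * ((J * Rg) * (A' * J)) := by rw [hR'def]; noncomm_ring
        _ = (Rg * A') * (A' * J) := by rw [hJRg, one_mul]
        _ = Rg * (A' * A') * J := by noncomm_ring
        _ = B := by rw [hA'C, hBdef]
    have hRR' : R' = R := aux_unique B R R' hRs hRp hRB hRcomm hR's hR'p hR'B
    calc A' = (J * Rg) * A' * (J * Rg) := by rw [hJRg, one_mul, mul_one]
      _ = J * (Rg * A' * J) * Rg := by noncomm_ring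
      _ = J * R * Rg := by rw [← hR'def, hRR']
      _ = A := rfl
  · -- Hilbert–Schmidt
    have hR1s : ∀ v w : H, ⟪(R + 1) v, w⟫ = ⟪v, (R + 1) w⟫ := by
      intro v w
      simp only [add_apply, ContinuousLinearMap.one_apply, inner_add_left, inner_add_right, hRs v w]
    have hR1low : ∀ v : H, 1 * ‖v‖ ≤ ‖(R + 1) v‖ := by
      intro v
      rcases eq_or_ne v 0 with h | h
      · simp [h]
      · have hv : (0:ℝ) < ‖v‖ := norm_pos_iff.mpr h
        have e1 : ⟪(R + 1) v, v⟫ = ⟪R v, v⟫ + ‖v‖ ^ 2 := by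
          simp only [add_apply, ContinuousLinearMap.one_apply, inner_add_left, real_inner_self_eq_norm_sq]
        have e2 : ⟪(R + 1) v, v⟫ ≤ ‖(R + 1) v‖ * ‖v‖ := real_inner_le_norm _ _
        have e3 : ‖v‖ * ‖v‖ ≤ ‖(R + 1) v‖ * ‖v‖ := by nlinarith [hRp v]
        rw [one_mul]
        exact le_of_mul_le_mul_right e3 hv
    obtain ⟨N, hN1, hN2⟩ := aux_inv (R + 1) hR1s 1 one_pos hR1low
    have hA1 : A + 1 = J * (R + 1) * Rg := by
      rw [hAdef]
      calc J * R * Rg + 1 = J * R * Rg + J * Rg := by rw [hJRg]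
        _ = J * (R + 1) * Rg := by noncomm_ring
    have hEA : (J * N * Rg) * (A + 1) = 1 := by
      rw [hA1]
      calc (J * N * Rg) * (J * (R + 1) * Rg)
          = (J * N) * ((Rg * J) * ((R + 1) * Rg)) := by noncomm_ring
        _ = (J * N) * ((R + 1) * Rg) := by rw [hRgJ, one_mul]
        _ = J * ((N * (R + 1)) * Rg) := by noncomm_ring
        _ = J * Rg := by rw [hN1, one_mul]
        _ = 1 := hJRg
    have hGC1 : G * (C - 1) = -T := by
      ext v
      apply ext_inner_right ℝ
      intro w
      simp only [ContinuousLinearMap.mul_apply, sub_apply, ContinuousLinearMap.one_apply, neg_apply, inner_neg_left]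
      rw [hG, map_sub, ContinuousLinearMap.sub_apply, hC, hT]
      ring
    have hJJG : J * (J * G) = 1 := by
      calc J * (J * G) = J * (J * (Rg * Rg)) := by rw [hRgG]
        _ = J * ((J * Rg) * Rg) := by noncomm_ring
        _ = J * Rg := by conv_lhs => rw [hJRg, one_mul]
        _ = 1 := hJRg
    have hCsub : C - 1 = -(J * (J * T)) := by
      calc C - 1 = (J * (J * G)) * (C - 1) := by rw [hJJG, one_mul]
        _ = J * (J * (G * (C - 1))) := by noncomm_ring
        _ = J * (J * (-T)) := by rw [hGC1]
        _ = -(J * (J * T)) := by noncomm_ring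
    have hAm1 : A - 1 = (J * N * Rg) * (C - 1) := by
      calc A - 1 = ((J * N * Rg) * (A + 1)) * (A - 1) := by rw [hEA, one_mul]
        _ = (J * N * Rg) * ((A + 1) * (A - 1)) := by noncomm_ring
        _ = (J * N * Rg) * (A * A - 1) := by congr 1; noncomm_ring
        _ = (J * N * Rg) * (C - 1) := by rw [hAA]
    have hfinal : A - 1 = (-((J * N * Rg) * (J * J))) * T := by
      rw [hAm1, hCsub]
      noncomm_ring
    obtain ⟨ι, b, hb⟩ := hHS
    refine ⟨ι, b, ?_⟩
    have happ : ∀ i, (A - 1) (b i) = (-((J * N * Rg) * (J * J))) (T (b i)) := fun i => by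
      rw [hfinal]; rfl
    refine Summable.of_nonneg_of_le (fun i => by positivity) (fun i => ?_)
      (hb.mul_left (‖-((J * N * Rg) * (J * J))‖ ^ 2))
    rw [happ i]
    calc ‖(-((J * N * Rg) * (J * J))) (T (b i))‖ ^ 2
        ≤ (‖-((J * N * Rg) * (J * J))‖ * ‖T (b i)‖) ^ 2 :=
          pow_le_pow_left₀ (norm_nonneg _) ((-((J * N * Rg) * (J * J))).le_opNorm _) 2
      _ = ‖-((J * N * Rg) * (J * J))‖ ^ 2 * ‖T (b i)‖ ^ 2 := by ring
  · intro v w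
    calc g1 (A v) (A w) = g1 (A (A v)) w := (hAsym (A v) w).symm
      _ = g1 (C v) w := by
          have hACv : A (A v) = C v := by
            conv_lhs => rw [← ContinuousLinearMap.mul_apply A A v]
            rw [hAA]
          rw [hACv]
      _ = g0 v w := hC v w
end

section
/- Let (H, ω) be a strongly symplectic real Hilbert space and J0, J1 two ω-compatible complex structures with J0 − J1 Hilbert–Schmidt. For every t ∈ [0,1], the spectrum of K_t = (1−t)J0 + tJ1 (complexified) is contained in the nonzero purely imaginary numbers. -/
open scoped RealInnerProductSpace

/-- A strong symplectic form on a real Hilbert space. -/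
structure IsStrongSymplectic {H : Type*} [NormedAddCommGroup H] [InnerProductSpace ℝ H]
    (ω : H →L[ℝ] H →L[ℝ] ℝ) : Prop where
  skew : ∀ v w : H, ω v w = - ω w v
  flat_bijective : Function.Bijective (fun v : H => (ω v : H →L[ℝ] ℝ))

/-- An `ω`-compatible complex structure. -/
structure IsCompatibleCplxStr {H : Type*} [NormedAddCommGroup H] [InnerProductSpace ℝ H]
    (ω : H →L[ℝ] H →L[ℝ] ℝ) (J : H →L[ℝ] H) : Prop where
  square : J * J = -1
  symm : ∀ v w : H, ω v (J w) = ω w (J v)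
  coercive : ∃ c : ℝ, 0 < c ∧ ∀ v : H, c * ‖v‖ ^ 2 ≤ ω v (J v)

theorem aux_isUnit_of_pair {H : Type*} [NormedAddCommGroup H] [InnerProductSpace ℝ H]
    [CompleteSpace H]
    (P : H ≃L[ℝ] H) (hP : ∀ x y : H, ⟪P x, y⟫ = ⟪x, P y⟫)
    (Lp Lm : H →L[ℝ] H)
    (hadj : ∀ v w : H, ⟪P (Lp v), w⟫ = ⟪P v, Lm w⟫)
    {Cp : ℝ} (hCp : 0 < Cp) (hp : ∀ v, Cp * ‖v‖ ≤ ‖Lp v‖)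
    {Cm : ℝ} (hCm : 0 < Cm) (hm : ∀ v, Cm * ‖v‖ ≤ ‖Lm v‖) :
    IsUnit Lp := by
  have hanti : AntilipschitzWith Cp⁻¹.toNNReal Lp := by
    refine Lp.antilipschitz_of_bound fun x => ?_
    rw [Real.coe_toNNReal', max_eq_left_of_lt (inv_pos.mpr hCp), ← div_eq_inv_mul,
      le_div_iff₀ hCp]
    linarith [hp x]
  have hker : LinearMap.ker (Lp : H →ₗ[ℝ] H) = ⊥ := by
    rw [LinearMap.ker_eq_bot]; exact hanti.injective
  have hclosed : IsClosed (LinearMap.range (Lp : H →ₗ[ℝ] H) : Set H) :=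
    hanti.isClosed_range Lp.uniformContinuous
  have hrange : LinearMap.range (Lp : H →ₗ[ℝ] H) = ⊤ := by
    haveI := hclosed.completeSpace_coe
    rw [← (LinearMap.range (Lp : H →ₗ[ℝ] H)).orthogonal_orthogonal, Submodule.eq_top_iff']
    intro v
    rw [Submodule.mem_orthogonal]
    intro w hw
    have hw' : ∀ u, ⟪Lp u, w⟫ = 0 := fun u =>
      (Submodule.mem_orthogonal _ w).mp hw _ ⟨u, rfl⟩
    have key : ∀ u, ⟪P u, Lm (P.symm w)⟫ = 0 := by
      intro u
      have h1 := hadj u (P.symm w)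
      have h2 : ⟪P (Lp u), P.symm w⟫ = ⟪Lp u, w⟫ := by
        rw [hP]; simp
      rw [h2, hw'] at h1
      exact h1.symm
    have hLm0 : Lm (P.symm w) = 0 := by
      have := key (P.symm (Lm (P.symm w)))
      simp only [ContinuousLinearEquiv.apply_symm_apply] at this
      exact inner_self_eq_zero.mp this
    have hPw : P.symm w = 0 := by
      have h := hm (P.symm w)
      rw [hLm0, norm_zero] at h
      have hn : ‖P.symm w‖ = 0 := by nlinarith [norm_nonneg (P.symm w)]
      exact norm_eq_zero.mp hn
    have : w = 0 := by
      have := congrArg P hPw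
      simpa using this
    simp [this]
  let e := ContinuousLinearEquiv.ofBijective Lp hker hrange
  have hcoe : ⇑e = ⇑Lp := ContinuousLinearEquiv.coeFn_ofBijective Lp hker hrange
  refine ⟨⟨Lp, (e.symm : H →L[ℝ] H), ?_, ?_⟩, rfl⟩
  · ext x
    have : Lp (e.symm x) = e (e.symm x) := by rw [hcoe]
    simp [ContinuousLinearMap.mul_apply, this]
  · ext x
    have : e.symm (Lp x) = e.symm (e x) := by rw [hcoe]
    simp [ContinuousLinearMap.mul_apply, this]

set_option maxHeartbeats 2000000 in
/-- if `J0 ∼ J1` are `ω`-compatible complex structures with Hilbert–Schmidt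
difference, then for every `t ∈ [0,1]` the (complexified) spectrum of
`K_t = (1-t)J0 + tJ1` is contained in the nonzero purely imaginary numbers; i.e. for
every `a + b i` which is not nonzero purely imaginary, `(K_t - a)² + b²` is invertible. -/
theorem spectrum_of_interpolation_imaginary
    {H : Type*} [NormedAddCommGroup H] [InnerProductSpace ℝ H] [CompleteSpace H]
    [TopologicalSpace.SeparableSpace H]
    (ω : H →L[ℝ] H →L[ℝ] ℝ) (hω : IsStrongSymplectic ω)
    (J0 J1 : H →L[ℝ] H)
    (h0 : IsCompatibleCplxStr ω J0) (h1 : IsCompatibleCplxStr ω J1)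
    (hHS : IsHilbertSchmidt (J0 - J1)) :
    ∀ t ∈ Set.Icc (0 : ℝ) 1, ∀ a b : ℝ, ¬ (a = 0 ∧ b ≠ 0) →
      IsUnit ((((1 - t) • J0 + t • J1) - a • 1) ^ 2 + (b ^ 2) • (1 : H →L[ℝ] H)) := by
  intro t ht a b hab
  obtain ⟨ht0, ht1⟩ := ht
  set K : H →L[ℝ] H := (1 - t) • J0 + t • J1 with hKdef
  obtain ⟨c0, hc0, hco0⟩ := h0.coercive
  obtain ⟨c1, hc1, hco1⟩ := h1.coercive
  set c := min c0 c1 with hc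
  have hcpos : 0 < c := lt_min hc0 hc1
  -- basic expansion of K
  have hKapp : ∀ v : H, K v = (1 - t) • J0 v + t • J1 v := by
    intro v; simp [hKdef]
  -- symmetry of g v w := ω v (K w)
  have gsymm : ∀ v w : H, ω v (K w) = ω w (K v) := by
    intro v w
    rw [hKapp, hKapp, map_add, map_add, map_smul, map_smul]
    simp only [ContinuousLinearMap.add_apply, ContinuousLinearMap.coe_smul', Pi.smul_apply,
      smul_eq_mul, map_add, map_smul]
    rw [h0.symm v w, h1.symm v w]
  -- coercivity of g
  have gcoer : ∀ v : H, c * ‖v‖ ^ 2 ≤ ω v (K v) := by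
    intro v
    have e : ω v (K v) = (1 - t) * ω v (J0 v) + t * ω v (J1 v) := by
      rw [hKapp]; simp
    have e0 := mul_le_mul_of_nonneg_left (hco0 v) (by linarith : (0:ℝ) ≤ 1 - t)
    have e1 := mul_le_mul_of_nonneg_left (hco1 v) ht0
    have l0 : c ≤ c0 := min_le_left _ _
    have l1 : c ≤ c1 := min_le_right _ _
    have m0 := mul_le_mul_of_nonneg_left
      (mul_le_mul_of_nonneg_right l0 (sq_nonneg ‖v‖)) (by linarith : (0:ℝ) ≤ 1 - t)
    have m1 := mul_le_mul_of_nonneg_left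
      (mul_le_mul_of_nonneg_right l1 (sq_nonneg ‖v‖)) ht0
    nlinarith [m0, m1]
  -- skew-adjointness of K w.r.t. g
  have A1 : ∀ v w : H, ω (K v) (K w) = - ω v (K (K w)) := by
    intro v w
    have h := gsymm v (K w)
    have h2 := hω.skew (K v) (K w)
    linarith
  have zero2 : ∀ x : H, ω x (K (K x)) = 0 := by
    intro x
    rw [gsymm x (K x)]
    have := hω.skew (K x) (K x); linarith
  -- bound on g
  set M : ℝ := ‖ω‖ * ‖K‖ + 1 with hM
  have hM1 : (1:ℝ) ≤ M := by
    have : (0:ℝ) ≤ ‖ω‖ * ‖K‖ := by positivity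
    linarith
  have hM0 : (0:ℝ) < M := by linarith
  have hgb : ∀ v w : H, |ω v (K w)| ≤ M * ‖v‖ * ‖w‖ := by
    intro v w
    have h1 : ‖ω v (K w)‖ ≤ ‖ω v‖ * ‖K w‖ := (ω v).le_opNorm _
    have h2 : ‖ω v‖ ≤ ‖ω‖ * ‖v‖ := ω.le_opNorm v
    have h3 : ‖K w‖ ≤ ‖K‖ * ‖w‖ := K.le_opNorm w
    have h4 : ‖ω v‖ * ‖K w‖ ≤ (‖ω‖ * ‖v‖) * (‖K‖ * ‖w‖) :=
      mul_le_mul h2 h3 (norm_nonneg _) (by positivity)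
    rw [← Real.norm_eq_abs, hM]
    nlinarith [mul_nonneg (norm_nonneg v) (norm_nonneg w)]
  -- the Lax-Milgram operator for g
  set B : H →L[ℝ] H →L[ℝ] ℝ := (ω.flip.comp K).flip with hB
  have hBapp : ∀ v w : H, B v w = ω v (K w) := fun v w => rfl
  have coer : IsCoercive B := by
    refine ⟨c, hcpos, fun u => ?_⟩
    rw [hBapp]
    calc c * ‖u‖ * ‖u‖ = c * ‖u‖ ^ 2 := by ring
      _ ≤ ω u (K u) := gcoer u
  set P := coer.continuousLinearEquivOfBilin with hPdef
  have hPapp : ∀ v w : H, ⟪P v, w⟫ = ω v (K w) := fun v w =>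
    coer.continuousLinearEquivOfBilin_apply v w
  have hPsa : ∀ x y : H, ⟪P x, y⟫ = ⟪x, P y⟫ := by
    intro x y
    rw [hPapp x y, gsymm x y, ← hPapp y x]
    exact real_inner_comm _ _
  -- pointwise expansion of the quadratic operator
  have hLapp : ∀ (s : ℝ) (v : H),
      ((K - s • 1) ^ 2 + (b ^ 2) • 1 : H →L[ℝ] H) v
        = K (K v) - (2 * s) • K v + (s ^ 2 + b ^ 2) • v := by
    intro s v
    simp only [ContinuousLinearMap.add_apply, ContinuousLinearMap.smul_apply,
      ContinuousLinearMap.one_apply, pow_two, ContinuousLinearMap.mul_apply,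
      ContinuousLinearMap.sub_apply, map_sub, map_smul]
    module
  -- expansion of g (L v) w
  have E1 : ∀ (s : ℝ) (v w : H),
      ω (((K - s • 1) ^ 2 + (b ^ 2) • 1 : H →L[ℝ] H) v) (K w)
        = -(ω (K v) (K (K w))) - 2 * s * (ω (K v) (K w)) + (s ^ 2 + b ^ 2) * (ω v (K w)) := by
    intro s v w
    rw [hLapp]
    simp only [map_sub, map_add, map_smul, ContinuousLinearMap.sub_apply,
      ContinuousLinearMap.add_apply, ContinuousLinearMap.coe_smul', Pi.smul_apply, smul_eq_mul]
    rw [A1 (K v) w]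
    try ring
  -- adjoint relation
  have hadjg : ∀ (s : ℝ) (v w : H),
      ω (((K - s • 1) ^ 2 + (b ^ 2) • 1 : H →L[ℝ] H) v) (K w)
        = ω (((K - (-s) • 1) ^ 2 + (b ^ 2) • 1 : H →L[ℝ] H) w) (K v) := by
    intro s v w
    rw [E1 s v w, E1 (-s) w v]
    have h1 := gsymm (K v) (K w)
    have h2 := hω.skew (K v) (K w)
    have h3 := gsymm v w
    linear_combination (-1 : ℝ) * h1 - 2 * s * h2 + (s ^ 2 + b ^ 2) * h3
  have hadjP : ∀ (s : ℝ) (v w : H),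
      ⟪P (((K - s • 1) ^ 2 + (b ^ 2) • 1 : H →L[ℝ] H) v), w⟫
        = ⟪P v, ((K - (-s) • 1) ^ 2 + (b ^ 2) • 1 : H →L[ℝ] H) w⟫ := by
    intro s v w
    rw [hPapp, hPapp, gsymm v _]
    exact hadjg s v w
  -- bounded-below estimate
  have hbdd : ∀ s : ℝ, s ≠ 0 → ∀ v : H,
      (2 * |s| * c * (s ^ 2 + b ^ 2)) / (M * (2 * |s| + ‖K‖)) * ‖v‖
        ≤ ‖((K - s • 1) ^ 2 + (b ^ 2) • 1 : H →L[ℝ] H) v‖ := by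
    intro s hs v
    set Lv : H := ((K - s • 1) ^ 2 + (b ^ 2) • 1 : H →L[ℝ] H) v with hLv
    have hα : 0 < |s| := abs_pos.mpr hs
    have hDpos : 0 < M * (2 * |s| + ‖K‖) := by
      have := norm_nonneg K
      have : 0 < 2 * |s| + ‖K‖ := by linarith
      exact mul_pos hM0 this
    rw [div_mul_eq_mul_div, div_le_iff₀ hDpos]
    rcases eq_or_ne v 0 with rfl | hv
    · simpa using mul_nonneg (norm_nonneg _) hDpos.le
    have hn : 0 < ‖v‖ := norm_pos_iff.mpr hv
    set q : ℝ := ω (K v) (K (K v)) with hq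
    have hqpos : 0 ≤ q := le_trans (by positivity) (gcoer (K v))
    have zeroKK : ω (K v) (K v) = 0 := by
      have := hω.skew (K v) (K v); linarith
    have i1 : ω Lv (K v) = -q + (s ^ 2 + b ^ 2) * (ω v (K v)) := by
      rw [hLv, E1 s v v, zeroKK]; ring
    have i2 : ω Lv (K (K v)) = -(2 * s * q) := by
      rw [hLv, E1 s v (K v), zero2 (K v), zero2 v]; ring
    have h2sq : 2 * |s| * q ≤ M * ‖Lv‖ * (‖K‖ * ‖v‖) := by
      have habs : 2 * |s| * q = |2 * s * q| := by
        rw [abs_mul, abs_mul, abs_of_nonneg hqpos, abs_two]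
      have hb := hgb Lv (K v)
      rw [i2, abs_neg] at hb
      calc 2 * |s| * q = |2 * s * q| := habs
        _ ≤ M * ‖Lv‖ * ‖K v‖ := hb
        _ ≤ M * ‖Lv‖ * (‖K‖ * ‖v‖) := by
            have h5 := mul_le_mul_of_nonneg_left (K.le_opNorm v)
              (mul_nonneg hM0.le (norm_nonneg Lv))
            nlinarith [h5]
    have hLvv : ω Lv (K v) ≤ M * ‖Lv‖ * ‖v‖ := (abs_le.mp (hgb Lv v)).2
    have hgvv := gcoer v
    have hsq : s ^ 2 = |s| ^ 2 := (sq_abs s).symm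
    have k1 := mul_le_mul_of_nonneg_left hgvv
      (by positivity : (0:ℝ) ≤ 2 * |s| * (s ^ 2 + b ^ 2))
    have k2 : 2 * |s| * (s ^ 2 + b ^ 2) * (ω v (K v))
        = 2 * |s| * (ω Lv (K v)) + 2 * |s| * q := by
      linear_combination (-2 : ℝ) * |s| * i1
    have k3 := mul_le_mul_of_nonneg_left hLvv (by positivity : (0:ℝ) ≤ 2 * |s|)
    have key : 2 * |s| * c * (s ^ 2 + b ^ 2) * ‖v‖ ^ 2
        ≤ M * ‖Lv‖ * (2 * |s| + ‖K‖) * ‖v‖ := by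
      linarith [k1, k2, k3, h2sq]
    have : 2 * |s| * c * (s ^ 2 + b ^ 2) * ‖v‖ ≤ M * ‖Lv‖ * (2 * |s| + ‖K‖) := by
      rw [← mul_le_mul_iff_left₀ hn]
      calc 2 * |s| * c * (s ^ 2 + b ^ 2) * ‖v‖ * ‖v‖
          = 2 * |s| * c * (s ^ 2 + b ^ 2) * ‖v‖ ^ 2 := by ring
        _ ≤ M * ‖Lv‖ * (2 * |s| + ‖K‖) * ‖v‖ := key
    linarith [this]
  -- split into cases
  by_cases ha : a = 0
  · -- then b = 0 and the operator is K * K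
    have hb0 : b = 0 := by
      by_contra hb
      exact hab ⟨ha, hb⟩
    subst ha; subst hb0
    have hEq : ((K - (0:ℝ) • 1) ^ 2 + ((0:ℝ) ^ 2) • (1 : H →L[ℝ] H)) = K * K := by
      simp [pow_two]
    rw [hEq]
    -- K is invertible
    set M' : ℝ := ‖ω‖ + 1 with hM'
    have hM'0 : (0:ℝ) < M' := by positivity
    have hKbdd : ∀ v : H, (c / M') * ‖v‖ ≤ ‖K v‖ := by
      intro v
      rcases eq_or_ne v 0 with rfl | hv
      · simp
      have hn : 0 < ‖v‖ := norm_pos_iff.mpr hv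
      have h1 : c * ‖v‖ ^ 2 ≤ ω v (K v) := gcoer v
      have h2 : ω v (K v) ≤ ‖ω v‖ * ‖K v‖ := by
        calc ω v (K v) ≤ |ω v (K v)| := le_abs_self _
          _ = ‖ω v (K v)‖ := (Real.norm_eq_abs _).symm
          _ ≤ ‖ω v‖ * ‖K v‖ := (ω v).le_opNorm _
      have h3 : ‖ω v‖ ≤ ‖ω‖ * ‖v‖ := ω.le_opNorm v
      have h4 : ‖ω v‖ * ‖K v‖ ≤ M' * ‖v‖ * ‖K v‖ := by
        rw [hM']
        nlinarith [mul_le_mul_of_nonneg_right h3 (norm_nonneg (K v)),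
          mul_nonneg (norm_nonneg v) (norm_nonneg (K v))]
      rw [div_mul_eq_mul_div, div_le_iff₀ hM'0]
      rw [← mul_le_mul_iff_left₀ hn]
      nlinarith
    have hCK : 0 < c / M' := by positivity
    have hadjK : ∀ v w : H, ⟪P (K v), w⟫ = ⟪P v, (-K) w⟫ := by
      intro v w
      rw [hPapp, hPapp]
      simp only [ContinuousLinearMap.neg_apply, map_neg]
      rw [A1 v w]
    have hKm : ∀ v : H, (c / M') * ‖v‖ ≤ ‖(-K) v‖ := by
      intro v
      simpa using hKbdd v
    have hKunit : IsUnit K := aux_isUnit_of_pair P hPsa K (-K) hadjK hCK hKbdd hCK hKm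
    exact hKunit.mul hKunit
  · -- a ≠ 0
    have hα : 0 < |a| := abs_pos.mpr ha
    have ha2 : 0 < a ^ 2 + b ^ 2 := by positivity
    have hDpos : 0 < M * (2 * |a| + ‖K‖) := by
      have := norm_nonneg K
      have : 0 < 2 * |a| + ‖K‖ := by linarith
      exact mul_pos hM0 this
    have hCp : 0 < (2 * |a| * c * (a ^ 2 + b ^ 2)) / (M * (2 * |a| + ‖K‖)) := by
      apply div_pos _ hDpos
      positivity
    have hDneg : 0 < M * (2 * |(-a)| + ‖K‖) := by
      rw [abs_neg]; exact hDpos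
    have hCm : 0 < (2 * |(-a)| * c * ((-a) ^ 2 + b ^ 2)) / (M * (2 * |(-a)| + ‖K‖)) := by
      apply div_pos _ hDneg
      rw [abs_neg]
      have : (-a) ^ 2 + b ^ 2 = a ^ 2 + b ^ 2 := by ring
      rw [this]
      positivity
    exact aux_isUnit_of_pair P hPsa _ _ (hadjP a) hCp (hbdd a ha) hCm
      (hbdd (-a) (neg_ne_zero.mpr ha))
end

section
/- Let H be a separable real Hilbert space with strong metric, and J0, J1 orthogonal complex structures with J0 − J1 Hilbert–Schmidt. Then the kernel of J0 + J1 is finite-dimensional and even-dimensional. -/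
open scoped RealInnerProductSpace

section Aux

variable {H : Type*} [NormedAddCommGroup H] [InnerProductSpace ℝ H]

/-- An orthogonal complex structure is skew-adjoint. -/
lemma skew_of_cs (J : H →L[ℝ] H) (hsq : J * J = -1) (hiso : ∀ v : H, ‖J v‖ = ‖v‖)
    (x y : H) : ⟪J x, y⟫ = -⟪x, J y⟫ := by
  have hinner : ∀ a b : H, ⟪J a, J b⟫ = ⟪a, b⟫ :=
    (LinearMap.norm_map_iff_inner_map_map J).mp hiso
  have hJJ : J (J y) = -y := by
    have := congrArg (fun f : H →L[ℝ] H => f y) hsq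
    simpa using this
  calc ⟪J x, y⟫ = ⟪J x, -(J (J y))⟫ := by rw [hJJ, neg_neg]
    _ = -⟪J x, J (J y)⟫ := by rw [inner_neg_right]
    _ = -⟪x, J y⟫ := by rw [hinner]

end Aux

set_option synthInstance.maxHeartbeats 1000000 in
/-- if `J0, J1` are orthogonal complex structures on a separable real
Hilbert space with `J0 − J1` Hilbert–Schmidt, then `ker (J0 + J1)` is
finite-dimensional of even dimension. -/
theorem ker_sum_of_complex_structures_even_dim
    {H : Type*} [NormedAddCommGroup H] [InnerProductSpace ℝ H] [CompleteSpace H]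
    [TopologicalSpace.SeparableSpace H]
    (J0 J1 : H →L[ℝ] H)
    (h0sq : J0 * J0 = -1) (h0iso : ∀ v : H, ‖J0 v‖ = ‖v‖)
    (h1sq : J1 * J1 = -1) (h1iso : ∀ v : H, ‖J1 v‖ = ‖v‖)
    (hHS : IsHilbertSchmidt (J0 - J1)) :
    FiniteDimensional ℝ (LinearMap.ker ((J0 + J1 : H →L[ℝ] H) : H →ₗ[ℝ] H)) ∧
    Even (Module.finrank ℝ (LinearMap.ker ((J0 + J1 : H →L[ℝ] H) : H →ₗ[ℝ] H))) := by
  classical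
  set K : Submodule ℝ H := LinearMap.ker ((J0 + J1 : H →L[ℝ] H) : H →ₗ[ℝ] H) with hK
  obtain ⟨ι, b, hsumT⟩ := hHS
  set C : ℝ := ∑' i, ‖(J0 - J1) (b i)‖ ^ 2 with hC
  have skew0 := skew_of_cs J0 h0sq h0iso
  have skew1 := skew_of_cs J1 h1sq h1iso
  -- transfer of the operator across the inner product
  have key : ∀ (e x : H), ⟪e, (J0 - J1) x⟫ = ⟪(J1 - J0) e, x⟫ := by
    intro e x
    have h0 : ⟪e, J0 x⟫ = -⟪J0 e, x⟫ := by
      have := skew0 e x; linarith [real_inner_comm e (J0 x), real_inner_comm (J0 e) x, this]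
    have h1 : ⟪e, J1 x⟫ = -⟪J1 e, x⟫ := by
      have := skew1 e x; linarith [real_inner_comm e (J1 x), real_inner_comm (J1 e) x, this]
    simp only [ContinuousLinearMap.sub_apply, inner_sub_right, inner_sub_left, h0, h1]
    ring
  -- on the kernel, `J1 - J0 = -2 J0`
  have hker : ∀ e ∈ K, (J1 - J0) e = -((2 : ℝ) • J0 e) := by
    intro e he
    have h : J0 e + J1 e = 0 := by
      simpa using LinearMap.mem_ker.mp he
    have : J1 e = -J0 e := eq_neg_of_add_eq_zero_right h
    simp [ContinuousLinearMap.sub_apply, this, two_smul]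
    abel
  have hkernorm : ∀ e ∈ K, ‖(J1 - J0) e‖ = 2 * ‖e‖ := by
    intro e he
    rw [hker e he, norm_neg, norm_smul]
    simp [h0iso e]
  -- key cardinality bound for orthonormal families in the kernel
  have hbound : ∀ (n : ℕ) (e : Fin n → H), Orthonormal ℝ e → (∀ j, e j ∈ K) →
      (n : ℝ) * 4 ≤ C := by
    intro n e he heK
    have hv4 : ∀ j : Fin n, HasSum (fun i => ⟪e j, (J0 - J1) (b i)⟫ ^ 2) 4 := by
      intro j
      have h := b.hasSum_inner_mul_inner ((J1 - J0) (e j)) ((J1 - J0) (e j))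
      have hval : ⟪(J1 - J0) (e j), (J1 - J0) (e j)⟫ = 4 := by
        rw [real_inner_self_eq_norm_sq, hkernorm _ (heK j), (he.1 j : ‖e j‖ = 1)]
        norm_num
      rw [hval] at h
      have hfun : (fun i => ⟪e j, (J0 - J1) (b i)⟫ ^ 2)
          = fun i => ⟪(J1 - J0) (e j), b i⟫ * ⟪b i, (J1 - J0) (e j)⟫ := by
        funext i
        rw [key, real_inner_comm ((J1 - J0) (e j)) (b i)]
        ring
      rw [hfun]; exact h
    have htot : HasSum (fun i => ∑ j : Fin n, ⟪e j, (J0 - J1) (b i)⟫ ^ 2)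
        ((n : ℝ) * 4) := by
      have := hasSum_sum (f := fun (j : Fin n) (i : ι) => ⟪e j, (J0 - J1) (b i)⟫ ^ 2)
        (s := Finset.univ) (a := fun _ => (4 : ℝ)) (fun j _ => hv4 j)
      simpa [Finset.sum_const, mul_comm] using this
    rw [← htot.tsum_eq]
    refine Summable.tsum_le_tsum ?_ htot.summable hsumT
    intro i
    have := he.sum_inner_products_le ((J0 - J1) (b i)) (s := Finset.univ)
    simpa [Real.norm_eq_abs, sq_abs] using this
  -- finite dimensionality
  have hfd : FiniteDimensional ℝ K := by
    by_contra hnot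
    have haleph : Cardinal.aleph0 ≤ Module.rank ℝ K := by
      by_contra h
      exact hnot (Module.rank_lt_aleph0_iff.mp (lt_of_not_ge h))
    obtain ⟨n, hn⟩ := exists_nat_gt (C / 4)
    have hrank : (n : Cardinal) ≤ Module.rank ℝ K :=
      le_trans (le_of_lt (Cardinal.nat_lt_aleph0 n)) haleph
    obtain ⟨s, hcard, hli⟩ := le_rank_iff_exists_linearIndependent_finset.mp hrank
    let q : Fin n ≃ (s : Set K) := (finCongr hcard.symm).trans s.equivFin.symm
    have hfli : LinearIndependent ℝ fun j : Fin n => ((q j : K)) :=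
      hli.comp q q.injective
    haveI : WellFoundedLT (Fin n) := Finite.to_wellFoundedLT
    have hg : Orthonormal ℝ (InnerProductSpace.gramSchmidtNormed ℝ fun j : Fin n => ((q j : K))) :=
      InnerProductSpace.gramSchmidtNormed_orthonormal hfli
    set g := InnerProductSpace.gramSchmidtNormed ℝ fun j : Fin n => ((q j : K)) with hgdef
    have heo : Orthonormal ℝ fun j : Fin n => ((g j : H)) :=
      hg.comp_linearIsometry K.subtypeₗᵢ
    have hb4 : (n : ℝ) * 4 ≤ C := hbound n _ heo (fun j => (g j).2)
    have : C < (n : ℝ) * 4 := by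
      rw [div_lt_iff₀ (by norm_num : (0:ℝ) < 4)] at hn
      linarith
    linarith
  refine ⟨hfd, ?_⟩
  -- even dimension via the restricted complex structure
  have hmem : ∀ x ∈ K, J0 x ∈ K := by
    intro x hx
    have h : J0 x + J1 x = 0 := by simpa using LinearMap.mem_ker.mp hx
    have h1x : J1 x = -J0 x := eq_neg_of_add_eq_zero_right h
    have hJ00 : J0 (J0 x) = -x := by
      have := congrArg (fun f : H →L[ℝ] H => f x) h0sq; simpa using this
    have hJ11 : J1 (J1 x) = -x := by
      have := congrArg (fun f : H →L[ℝ] H => f x) h1sq; simpa using this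
    refine LinearMap.mem_ker.mpr ?_
    have : J0 (J0 x) + J1 (J0 x) = 0 := by
      have hJ10 : J1 (J0 x) = x := by
        rw [show J0 x = -J1 x by rw [h1x]; abel, map_neg, hJ11]; abel
      rw [hJ00, hJ10]; abel
    simpa using this
  let Jk : K →ₗ[ℝ] K := LinearMap.restrict (J0 : H →ₗ[ℝ] H) hmem
  have hJk2 : Jk ∘ₗ Jk = -LinearMap.id := by
    ext x
    have hJ00 : J0 (J0 (x : H)) = -(x : H) := by
      have := congrArg (fun f : H →L[ℝ] H => f (x : H)) h0sq; simpa using this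
    simp [Jk, LinearMap.restrict_apply, hJ00]
  have hdet : LinearMap.det Jk * LinearMap.det Jk
      = (-1 : ℝ) ^ Module.finrank ℝ K := by
    rw [← LinearMap.det_comp, hJk2,
      (neg_one_smul ℝ (LinearMap.id : K →ₗ[ℝ] K)).symm,
      LinearMap.det_smul, LinearMap.det_id, mul_one]
  rcases Nat.even_or_odd (Module.finrank ℝ K) with h | h
  · exact h
  · exfalso
    have hneg : ((-1 : ℝ)) ^ Module.finrank ℝ K = -1 := h.neg_one_pow
    have := mul_self_nonneg (LinearMap.det Jk)
    rw [hdet, hneg] at this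
    linarith
end

section
/- Let H be a real Hilbert space, ω a strong symplectic form, and J0, J1 two ω-compatible complex structures. Then there exists A ∈ Sp(H, ω) with A J0 A⁻¹ = J1; i.e., the symplectic group acts transitively on the set of ω-compatible complex structures. -/
set_option maxHeartbeats 1600000
set_option synthInstance.maxHeartbeats 400000
open Filter Topology

section AuxBil
variable {H : Type*} [NormedAddCommGroup H] [InnerProductSpace ℝ H]
variable (G : H →L[ℝ] H →L[ℝ] ℝ)

lemma aux_cs_s18 (hsym : ∀ v w, G v w = G w v) (hnn : ∀ v, 0 ≤ G v v) (v w : H) :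
    (G v w)^2 ≤ G v v * G w w := by
  have hexp : ∀ s : ℝ, 0 ≤ G v v - 2 * s * G v w + s ^ 2 * G w w := by
    intro s
    have h := hnn (v - s • w)
    have he : G (v - s • w) (v - s • w) = G v v - 2 * s * G v w + s ^ 2 * G w w := by
      simp only [map_sub, map_smul, ContinuousLinearMap.sub_apply,
        ContinuousLinearMap.smul_apply, smul_eq_mul]
      rw [hsym w v]; ring
    linarith [he ▸ h]
  rcases lt_or_eq_of_le (hnn w) with hw | hw
  · have h5 := hnn (G w w • v - G v w • w)
    have he : G (G w w • v - G v w • w) (G w w • v - G v w • w)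
        = G w w * (G v v * G w w - (G v w)^2) := by
      simp only [map_sub, map_smul, ContinuousLinearMap.sub_apply,
        ContinuousLinearMap.smul_apply, smul_eq_mul]
      rw [hsym w v]; ring
    rw [he] at h5
    nlinarith [h5, hw]
  · have hzero : G v w = 0 := by
      by_contra hne
      have h := hexp ((G v v + 1) / (2 * G v w))
      have h2 : 2 * ((G v v + 1) / (2 * G v w)) * G v w = G v v + 1 := by
        field_simp
      rw [← hw] at h
      rw [h2] at h
      simp at h; linarith
    rw [hzero, ← hw]; norm_num

lemma aux_gn_cs (hsym : ∀ v w, G v w = G w v) (hnn : ∀ v, 0 ≤ G v v) (v w : H) :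
    G v w ≤ Real.sqrt (G v v) * Real.sqrt (G w w) := by
  have h := aux_cs_s18 G hsym hnn v w
  have habs : G v w ≤ |G v w| := le_abs_self _
  refine habs.trans ?_
  rw [← Real.sqrt_sq_eq_abs, ← Real.sqrt_mul (hnn v)]
  exact Real.sqrt_le_sqrt h

lemma aux_gn_add (hsym : ∀ v w, G v w = G w v) (hnn : ∀ v, 0 ≤ G v v) (v w : H) :
    Real.sqrt (G (v + w) (v + w)) ≤ Real.sqrt (G v v) + Real.sqrt (G w w) := by
  have hcs := aux_gn_cs G hsym hnn v w
  have hexp : G (v + w) (v + w) = G v v + 2 * G v w + G w w := by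
    simp only [map_add, ContinuousLinearMap.add_apply]
    rw [hsym w v]; ring
  have h1 : G (v + w) (v + w) ≤ (Real.sqrt (G v v) + Real.sqrt (G w w))^2 := by
    rw [hexp, add_sq, Real.sq_sqrt (hnn v), Real.sq_sqrt (hnn w)]
    nlinarith
  calc Real.sqrt (G (v + w) (v + w)) ≤ Real.sqrt ((Real.sqrt (G v v) + Real.sqrt (G w w))^2) :=
        Real.sqrt_le_sqrt h1
  _ = Real.sqrt (G v v) + Real.sqrt (G w w) := by
      rw [Real.sqrt_sq (by positivity)]

lemma aux_gn_smul (c : ℝ) (v : H) :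
    Real.sqrt (G (c • v) (c • v)) = |c| * Real.sqrt (G v v) := by
  simp only [map_smul, ContinuousLinearMap.smul_apply, smul_eq_mul]
  have h : c * (c * G v v) = c^2 * G v v := by ring
  rw [h, Real.sqrt_mul (sq_nonneg c), Real.sqrt_sq_eq_abs]

/-- Polarization bound: a `G`-selfadjoint operator with numerical radius `≤ r`
has `G`-norm at most `r`. -/
lemma aux_polarization (hsym : ∀ v w, G v w = G w v) (hnn : ∀ v, 0 ≤ G v v)
    (X : H →L[ℝ] H) (hsa : ∀ v w, G (X v) w = G v (X w))
    {r : ℝ} (hr : 0 < r) (hb : ∀ v, |G v (X v)| ≤ r * G v v) (v : H) :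
    G (X v) (X v) ≤ r ^ 2 * G v v := by
  set q := G (X v) (X v) with hq
  have hqnn : 0 ≤ q := hnn _
  have key : ∀ t : ℝ, 2 * t * q ≤ r * (t ^ 2 * q + G v v) := by
    intro t
    set u := t • X v with hu
    have e1 : G (u + v) (X (u + v)) ≤ r * G (u + v) (u + v) :=
      (le_abs_self _).trans (hb _)
    have e2 : - G (u - v) (X (u - v)) ≤ r * G (u - v) (u - v) :=
      (neg_le_abs _).trans (hb _)
    have h4 : G v (X (X v)) = q := by rw [← hsa]
    have lhs : G (u + v) (X (u + v)) - G (u - v) (X (u - v)) = 4 * t * q := by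
      simp only [hu, map_add, map_sub, map_smul, ContinuousLinearMap.add_apply,
        ContinuousLinearMap.sub_apply, ContinuousLinearMap.smul_apply, smul_eq_mul]
      linear_combination (2*t) * h4 + (2*t) * hq.symm
    have rhs : G (u + v) (u + v) + G (u - v) (u - v) = 2 * (t^2 * q + G v v) := by
      simp only [hu, map_add, map_sub, map_smul, ContinuousLinearMap.add_apply,
        ContinuousLinearMap.sub_apply, ContinuousLinearMap.smul_apply, smul_eq_mul]
      linear_combination (2*t^2) * hq.symm
    have hsum : 4 * t * q ≤ r * (2 * (t ^ 2 * q + G v v)) := by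
      calc 4 * t * q = G (u + v) (X (u + v)) - G (u - v) (X (u - v)) := lhs.symm
      _ ≤ r * G (u + v) (u + v) + r * G (u - v) (u - v) := by linarith
      _ = r * (G (u + v) (u + v) + G (u - v) (u - v)) := by ring
      _ = r * (2 * (t ^ 2 * q + G v v)) := by rw [rhs]
    linarith
  have h := key r⁻¹
  have hx : r * ((r⁻¹) ^ 2 * q + G v v) = r⁻¹ * q + r * G v v := by
    field_simp
  have hfin : r⁻¹ * q ≤ r * G v v := by
    rw [hx] at h; linarith
  have hq2 : q = r * (r⁻¹ * q) := by field_simp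
  calc q = r * (r⁻¹ * q) := hq2
  _ ≤ r * (r * G v v) := mul_le_mul_of_nonneg_left hfin hr.le
  _ = r ^ 2 * G v v := by ring

end AuxBil

/-- the symplectic group of a strongly symplectic real Hilbert space acts
transitively on the set of `ω`-compatible complex structures: for any two compatible
`J0, J1` there is a bounded invertible symplectic transformation `A` with
`A J0 A⁻¹ = J1`. -/
theorem symplectic_group_transitive_on_compatible
    {H : Type*} [NormedAddCommGroup H] [InnerProductSpace ℝ H] [CompleteSpace H]
    [TopologicalSpace.SeparableSpace H]
    (ω : H →L[ℝ] H →L[ℝ] ℝ) (hω : IsStrongSymplectic ω)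
    (J0 J1 : H →L[ℝ] H)
    (h0 : IsCompatibleCplxStr ω J0) (h1 : IsCompatibleCplxStr ω J1) :
    ∃ A : H ≃L[ℝ] H, (∀ v w : H, ω (A v) (A w) = ω v w) ∧
      ∀ v : H, A (J0 v) = J1 (A v) := by
  classical
  obtain ⟨c0, hc0, hco0⟩ := h0.coercive
  obtain ⟨c1, hc1, hco1⟩ := h1.coercive
  have hJ0J0 : ∀ v, J0 (J0 v) = -v := by
    intro v
    have h := ContinuousLinearMap.ext_iff.mp h0.square v
    simpa [ContinuousLinearMap.mul_apply] using h
  have hJ1J1 : ∀ v, J1 (J1 v) = -v := by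
    intro v
    have h := ContinuousLinearMap.ext_iff.mp h1.square v
    simpa [ContinuousLinearMap.mul_apply] using h
  have hωJ0 : ∀ v w, ω (J0 v) (J0 w) = ω v w := by
    intro v w
    rw [h0.symm (J0 v) w, hJ0J0, map_neg]
    exact (hω.skew v w).symm
  have hωJ1 : ∀ v w, ω (J1 v) (J1 w) = ω v w := by
    intro v w
    rw [h1.symm (J1 v) w, hJ1J1, map_neg]
    exact (hω.skew v w).symm
  -- the inner product G
  set G : H →L[ℝ] H →L[ℝ] ℝ := (ω.flip.comp J0).flip with hGdef
  have hGapp : ∀ v w, G v w = ω v (J0 w) := by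
    intro v w
    simp [hGdef, ContinuousLinearMap.flip_apply, ContinuousLinearMap.comp_apply]
  have hGsym : ∀ v w, G v w = G w v := by
    intro v w; rw [hGapp, hGapp]; exact h0.symm v w
  have hGlow : ∀ v, c0 * ‖v‖^2 ≤ G v v := by
    intro v; rw [hGapp]; exact hco0 v
  have hGnn : ∀ v, 0 ≤ G v v := by
    intro v; exact le_trans (by positivity) (hGlow v)
  set C0 : ℝ := ‖ω‖ * ‖J0‖ + 1 with hC0def
  have hC0 : 0 < C0 := by positivity
  have hGub : ∀ v w, |G v w| ≤ C0 * (‖v‖ * ‖w‖) := by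
    intro v w
    rw [hGapp]
    have h1' : ‖ω v (J0 w)‖ ≤ ‖ω‖ * ‖v‖ * ‖J0 w‖ := ω.le_opNorm₂ v (J0 w)
    have h2' : ‖J0 w‖ ≤ ‖J0‖ * ‖w‖ := J0.le_opNorm w
    have h4 : ‖ω‖ * ‖v‖ * ‖J0 w‖ ≤ ‖ω‖ * ‖v‖ * (‖J0‖ * ‖w‖) :=
      mul_le_mul_of_nonneg_left h2' (by positivity)
    calc |ω v (J0 w)| = ‖ω v (J0 w)‖ := (Real.norm_eq_abs _).symm
    _ ≤ ‖ω‖ * ‖v‖ * ‖J0 w‖ := h1'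
    _ ≤ ‖ω‖ * ‖v‖ * (‖J0‖ * ‖w‖) := h4
    _ ≤ C0 * (‖v‖ * ‖w‖) := by
        rw [hC0def]
        nlinarith [norm_nonneg v, norm_nonneg w, mul_nonneg (norm_nonneg v) (norm_nonneg w)]
  have hGupper : ∀ v, G v v ≤ C0 * ‖v‖^2 := by
    intro v
    have := (le_abs_self (G v v)).trans (hGub v v)
    calc G v v ≤ C0 * (‖v‖ * ‖v‖) := this
    _ = C0 * ‖v‖^2 := by ring
  clear_value G C0
  -- the G-norm
  set gn : H → ℝ := fun v => Real.sqrt (G v v) with hgndef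
  have hgn_nn : ∀ v, 0 ≤ gn v := fun v => Real.sqrt_nonneg _
  have hgn_sq : ∀ v, gn v ^ 2 = G v v := fun v => Real.sq_sqrt (hGnn v)
  have hgn_add : ∀ v w, gn (v + w) ≤ gn v + gn w := fun v w => aux_gn_add G hGsym hGnn v w
  have hgn_smul : ∀ (c : ℝ) v, gn (c • v) = |c| * gn v := fun c v => aux_gn_smul G c v
  have hgn_cs : ∀ v w, G v w ≤ gn v * gn w := fun v w => aux_gn_cs G hGsym hGnn v w
  have hgn_zero : gn (0 : H) = 0 := by
    show Real.sqrt (G 0 0) = 0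
    simp
  have hgn_low : ∀ v, Real.sqrt c0 * ‖v‖ ≤ gn v := by
    intro v
    show Real.sqrt c0 * ‖v‖ ≤ Real.sqrt (G v v)
    have h := Real.sqrt_le_sqrt (hGlow v)
    calc Real.sqrt c0 * ‖v‖ = Real.sqrt (c0 * ‖v‖^2) := by
          rw [Real.sqrt_mul hc0.le, Real.sqrt_sq (norm_nonneg v)]
    _ ≤ Real.sqrt (G v v) := h
  have hgn_up : ∀ v, gn v ≤ Real.sqrt C0 * ‖v‖ := by
    intro v
    show Real.sqrt (G v v) ≤ Real.sqrt C0 * ‖v‖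
    calc Real.sqrt (G v v) ≤ Real.sqrt (C0 * ‖v‖^2) := Real.sqrt_le_sqrt (hGupper v)
    _ = Real.sqrt C0 * ‖v‖ := by rw [Real.sqrt_mul hC0.le, Real.sqrt_sq (norm_nonneg v)]
  clear_value gn
  -- the operator T and its inverse
  set T : H →L[ℝ] H := -(J0 * J1) with hTdef
  set Ti : H →L[ℝ] H := -(J1 * J0) with hTidef
  have hTapp : ∀ v, T v = -(J0 (J1 v)) := by
    intro v; rw [hTdef]; simp [ContinuousLinearMap.mul_apply]
  have hTiapp : ∀ v, Ti v = -(J1 (J0 v)) := by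
    intro v; rw [hTidef]; simp [ContinuousLinearMap.mul_apply]
  clear_value T Ti
  have hTTiv : ∀ v, T (Ti v) = v := by
    intro v; rw [hTiapp, hTapp]; simp [map_neg, hJ1J1, hJ0J0]
  have hTiTv : ∀ v, Ti (T v) = v := by
    intro v; rw [hTapp, hTiapp]; simp [map_neg, hJ1J1, hJ0J0]
  have hJ0Tv : ∀ v, J0 (T v) = J1 v := by
    intro v; rw [hTapp]; simp [map_neg, hJ0J0]
  have hTiJ0v : ∀ v, Ti (J0 v) = J1 v := by
    intro v; rw [hTiapp]; simp [hJ0J0, map_neg]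
  have hTJ0v : ∀ v, T (J0 v) = J0 (Ti v) := by
    intro v; rw [hTapp, hTiapp]; simp [map_neg]
  -- G and T
  have hGT : ∀ v w, G v (T w) = ω v (J1 w) := by
    intro v w; rw [hGapp, hJ0Tv]
  have hTsa : ∀ v w, G (T v) w = G v (T w) := by
    intro v w
    rw [hGT, hGapp, hTapp, map_neg ω, ContinuousLinearMap.neg_apply, hωJ0,
      hω.skew (J1 v) w, neg_neg]
    exact (h1.symm v w).symm
  have hTlow : ∀ v, (c1 / C0) * G v v ≤ G v (T v) := by
    intro v
    rw [hGT]
    have h1' := hco1 v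
    have h2' : (c1 / C0) * G v v ≤ (c1 / C0) * (C0 * ‖v‖^2) :=
      mul_le_mul_of_nonneg_left (hGupper v) (div_pos hc1 hC0).le
    have h3' : (c1 / C0) * (C0 * ‖v‖^2) = c1 * ‖v‖^2 := by
      field_simp
    linarith
  have hTub : ∀ v, G v (T v) ≤ (C0 * ‖T‖ / c0) * G v v := by
    intro v
    have h1' : G v (T v) ≤ |G v (T v)| := le_abs_self _
    have h2' := hGub v (T v)
    have h3' : ‖T v‖ ≤ ‖T‖ * ‖v‖ := T.le_opNorm v
    have h4' : ‖v‖^2 ≤ G v v / c0 := by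
      rw [le_div_iff₀ hc0]
      calc ‖v‖^2 * c0 = c0 * ‖v‖^2 := by ring
      _ ≤ G v v := hGlow v
    have h5' : C0 * (‖v‖ * ‖T v‖) ≤ C0 * ‖T‖ * ‖v‖^2 := by
      have h := mul_le_mul_of_nonneg_left h3' (mul_nonneg hC0.le (norm_nonneg v))
      nlinarith [h]
    have h6' : C0 * ‖T‖ * ‖v‖^2 ≤ C0 * ‖T‖ * (G v v / c0) :=
      mul_le_mul_of_nonneg_left h4' (mul_nonneg hC0.le (norm_nonneg T))
    calc G v (T v) ≤ |G v (T v)| := h1'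
    _ ≤ C0 * (‖v‖ * ‖T v‖) := h2'
    _ ≤ C0 * ‖T‖ * ‖v‖^2 := h5'
    _ ≤ C0 * ‖T‖ * (G v v / c0) := h6'
    _ = (C0 * ‖T‖ / c0) * G v v := by ring
  set μ : ℝ := c1 / C0 with hμdef
  have hμ : 0 < μ := by rw [hμdef]; exact div_pos hc1 hC0
  clear_value μ
  set M : ℝ := C0 * ‖T‖ / c0 + μ + 1 with hMdef
  have hM0 : 0 < M := by
    have h1' : (0:ℝ) ≤ C0 * ‖T‖ / c0 := div_nonneg (mul_nonneg hC0.le (norm_nonneg T)) hc0.le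
    rw [hMdef]; linarith
  clear_value M
  have hMne : M ≠ 0 := ne_of_gt hM0
  have hMi : (0:ℝ) < M⁻¹ := inv_pos.mpr hM0
  have hTub' : ∀ v, G v (T v) ≤ M * G v v := by
    intro v
    have h := hTub v
    have h3' : C0 * ‖T‖ / c0 ≤ M := by rw [hMdef]; linarith [hμ]
    have h2' : (C0 * ‖T‖ / c0) * G v v ≤ M * G v v :=
      mul_le_mul_of_nonneg_right h3' (hGnn v)
    linarith
  -- the scaled operator S
  set S : H →L[ℝ] H := 1 - M⁻¹ • T with hSdef
  have hSapp : ∀ v, S v = v - M⁻¹ • T v := by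
    intro v; rw [hSdef]
    simp [ContinuousLinearMap.sub_apply, ContinuousLinearMap.smul_apply,
      ContinuousLinearMap.one_apply]
  clear_value S
  have hGvS : ∀ v, G v (S v) = G v v - M⁻¹ * G v (T v) := by
    intro v; rw [hSapp]; simp [map_sub, map_smul, smul_eq_mul]
  have hSsa : ∀ v w, G (S v) w = G v (S w) := by
    intro v w
    rw [hSapp, hSapp]
    simp only [map_sub, map_smul, ContinuousLinearMap.sub_apply,
      ContinuousLinearMap.smul_apply, smul_eq_mul]
    rw [hTsa]
  set r : ℝ := max (1 - μ / M) (1/2) with hrdef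
  have hr0 : (0:ℝ) < r := by
    rw [hrdef]; exact lt_of_lt_of_le (by norm_num) (le_max_right _ _)
  have hr1 : r < 1 := by
    rw [hrdef]
    apply max_lt
    · have : 0 < μ / M := div_pos hμ hM0
      linarith
    · norm_num
  have hrmax : 1 - μ / M ≤ r := by rw [hrdef]; exact le_max_left _ _
  clear_value r
  have hSbound : ∀ v, |G v (S v)| ≤ r * G v v := by
    intro v
    rw [hGvS]
    have hub := hTub' v
    have hlb := hTlow v
    rw [abs_le]
    constructor
    · have h1' : M⁻¹ * G v (T v) ≤ M⁻¹ * (M * G v v) := mul_le_mul_of_nonneg_left hub hMi.le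
      have h2' : M⁻¹ * (M * G v v) = G v v := by field_simp
      have h3' : 0 ≤ r * G v v := mul_nonneg hr0.le (hGnn v)
      linarith
    · have h1' : M⁻¹ * (μ * G v v) ≤ M⁻¹ * G v (T v) :=
        mul_le_mul_of_nonneg_left hlb hMi.le
      have h2' : G v v - M⁻¹ * (μ * G v v) = (1 - μ/M) * G v v := by
        field_simp
      have h3' : (1 - μ/M) * G v v ≤ r * G v v :=
        mul_le_mul_of_nonneg_right hrmax (hGnn v)
      linarith
  have hSnorm := aux_polarization G hGsym hGnn S hSsa hr0 hSbound
  have hgnS : ∀ v, gn (S v) ≤ r * gn v := by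
    intro v
    have h1' : gn (S v) ^ 2 ≤ (r * gn v)^2 := by
      rw [hgn_sq, mul_pow, hgn_sq]
      exact hSnorm v
    calc gn (S v) = Real.sqrt (gn (S v)^2) := (Real.sqrt_sq (hgn_nn _)).symm
    _ ≤ Real.sqrt ((r * gn v)^2) := Real.sqrt_le_sqrt h1'
    _ = r * gn v := Real.sqrt_sq (mul_nonneg hr0.le (hgn_nn v))
  -- the contraction constant t
  set t : ℝ := 1 - Real.sqrt (1 - r) with htdef
  have hsq1r : Real.sqrt (1-r) ^ 2 = 1 - r := Real.sq_sqrt (by linarith)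
  have ht0 : (0:ℝ) < t := by
    rw [htdef]
    have h1' : Real.sqrt (1-r) < 1 := by
      nlinarith [hsq1r, Real.sqrt_nonneg (1-r)]
    linarith
  have ht1 : t < 1 := by
    rw [htdef]
    have := Real.sqrt_pos.mpr (by linarith : (0:ℝ) < 1 - r)
    linarith
  have htr : r + t^2 = 2*t := by
    rw [htdef]
    linear_combination hsq1r
  clear_value t
  have htr2 : r ≤ 2*t := by linarith [htr, sq_nonneg t]
  -- the iteration scheme
  set Yseq : ℕ → (H →L[ℝ] H) :=
    fun n => (fun Z : H →L[ℝ] H => (2:ℝ)⁻¹ • (S + Z * Z))^[n] 0 with hYseqdef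
  have hY0 : Yseq 0 = 0 := rfl
  have hYsucc : ∀ n, Yseq (n+1) = (2:ℝ)⁻¹ • (S + Yseq n * Yseq n) := by
    intro n
    rw [hYseqdef]
    simp only
    rw [Function.iterate_succ_apply']
  clear_value Yseq
  have hYsuccv : ∀ n v, Yseq (n+1) v = (2:ℝ)⁻¹ • (S v + Yseq n (Yseq n v)) := by
    intro n v
    rw [hYsucc n]
    simp [ContinuousLinearMap.smul_apply, ContinuousLinearMap.add_apply,
      ContinuousLinearMap.mul_apply]
  have hY0v : ∀ v, Yseq 0 v = 0 := by intro v; rw [hY0]; simp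
  -- invariant: G-selfadjointness
  have hYsa : ∀ n v w, G (Yseq n v) w = G v (Yseq n w) := by
    intro n
    induction n with
    | zero => intro v w; rw [hY0v, hY0v]; simp
    | succ n ih =>
      intro v w
      rw [hYsuccv, hYsuccv]
      simp only [map_smul, map_add, ContinuousLinearMap.smul_apply,
        ContinuousLinearMap.add_apply, smul_eq_mul]
      rw [hSsa v w, ih (Yseq n v) w, ih v (Yseq n w)]
  -- invariant: gn-operator bound
  have hYgn : ∀ n v, gn (Yseq n v) ≤ t * gn v := by
    intro n
    induction n with
    | zero =>
      intro v
      rw [hY0v, hgn_zero]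
      exact mul_nonneg ht0.le (hgn_nn v)
    | succ n ih =>
      intro v
      rw [hYsuccv, hgn_smul]
      have habs : |(2:ℝ)⁻¹| = 2⁻¹ := by norm_num
      rw [habs]
      have h1' := hgn_add (S v) (Yseq n (Yseq n v))
      have h2' := hgnS v
      have h5' : gn (Yseq n (Yseq n v)) ≤ t * (t * gn v) := by
        calc gn (Yseq n (Yseq n v)) ≤ t * gn (Yseq n v) := ih (Yseq n v)
        _ ≤ t * (t * gn v) := mul_le_mul_of_nonneg_left (ih v) ht0.le
      calc (2:ℝ)⁻¹ * gn (S v + Yseq n (Yseq n v))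
          ≤ 2⁻¹ * (gn (S v) + gn (Yseq n (Yseq n v))) := by
            apply mul_le_mul_of_nonneg_left h1' (by norm_num)
      _ ≤ 2⁻¹ * (r * gn v + t * (t * gn v)) := by
            apply mul_le_mul_of_nonneg_left (by linarith) (by norm_num)
      _ = 2⁻¹ * ((r + t^2) * gn v) := by ring
      _ = 2⁻¹ * (2 * t * gn v) := by rw [htr]
      _ = t * gn v := by ring
  -- invariant: commutation
  have hYcommT : ∀ n (B : H →L[ℝ] H), B * T = T * B → B * Yseq n = Yseq n * B := by
    intro n
    induction n with
    | zero => intro B hB; rw [hY0]; simp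
    | succ n ih =>
      intro B hB
      rw [hYsucc]
      have hS : B * S = S * B := by
        rw [hSdef, mul_sub, sub_mul, mul_one, one_mul, mul_smul_comm, smul_mul_assoc, hB]
      have hY : B * Yseq n = Yseq n * B := ih B hB
      have hYY : B * (Yseq n * Yseq n) = (Yseq n * Yseq n) * B := by
        calc B * (Yseq n * Yseq n) = (B * Yseq n) * Yseq n := by rw [mul_assoc]
        _ = (Yseq n * B) * Yseq n := by rw [hY]
        _ = Yseq n * (B * Yseq n) := by rw [mul_assoc]
        _ = Yseq n * (Yseq n * B) := by rw [hY]
        _ = (Yseq n * Yseq n) * B := by rw [← mul_assoc]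
      rw [mul_smul_comm, smul_mul_assoc, mul_add, add_mul, hS, hYY]
  -- geometric difference bound
  have hDgn : ∀ n v, gn (Yseq (n+1) v - Yseq n v) ≤ t^(n+1) * gn v := by
    intro n
    induction n with
    | zero =>
      intro v
      rw [hYsuccv, hY0v v, hY0v 0]
      rw [pow_one]
      simp only [add_zero, sub_zero]
      rw [hgn_smul]
      have habs : |(2:ℝ)⁻¹| = 2⁻¹ := by norm_num
      rw [habs]
      nlinarith [htr2, hgn_nn v, hgnS v]
    | succ n ih =>
      intro v
      have hstep : Yseq (n+2) v - Yseq (n+1) v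
          = (2:ℝ)⁻¹ • (Yseq (n+1) (Yseq (n+1) v - Yseq n v)
            + (Yseq (n+1) (Yseq n v) - Yseq n (Yseq n v))) := by
        rw [hYsuccv (n+1) v, hYsuccv n v, map_sub, ← smul_sub]
        congr 1
        abel
      rw [hstep, hgn_smul]
      have habs : |(2:ℝ)⁻¹| = 2⁻¹ := by norm_num
      rw [habs]
      have hu : (0:ℝ) ≤ t^(n+1) := pow_nonneg ht0.le _
      have e1 : gn (Yseq (n+1) (Yseq (n+1) v - Yseq n v)) ≤ t * (t^(n+1) * gn v) :=
        le_trans (hYgn (n+1) _) (mul_le_mul_of_nonneg_left (ih v) ht0.le)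
      have e2 : gn (Yseq (n+1) (Yseq n v) - Yseq n (Yseq n v)) ≤ t^(n+1) * (t * gn v) :=
        le_trans (ih (Yseq n v)) (mul_le_mul_of_nonneg_left (hYgn n v) hu)
      have e3 := hgn_add (Yseq (n+1) (Yseq (n+1) v - Yseq n v))
        (Yseq (n+1) (Yseq n v) - Yseq n (Yseq n v))
      rw [pow_succ]
      calc (2:ℝ)⁻¹ * gn (Yseq (n+1) (Yseq (n+1) v - Yseq n v)
            + (Yseq (n+1) (Yseq n v) - Yseq n (Yseq n v)))
          ≤ 2⁻¹ * (gn (Yseq (n+1) (Yseq (n+1) v - Yseq n v))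
            + gn (Yseq (n+1) (Yseq n v) - Yseq n (Yseq n v))) := by
            apply mul_le_mul_of_nonneg_left e3 (by norm_num)
      _ ≤ 2⁻¹ * (t * (t^(n+1) * gn v) + t^(n+1) * (t * gn v)) := by
            apply mul_le_mul_of_nonneg_left (by linarith) (by norm_num)
      _ = t^(n+1) * t * gn v := by ring
  -- convergence
  set Kc : ℝ := Real.sqrt C0 / Real.sqrt c0 with hKcdef
  have hKc : 0 ≤ Kc := by rw [hKcdef]; positivity
  clear_value Kc
  have hDnorm : ∀ n, ‖Yseq (n+1) - Yseq n‖ ≤ (Kc * t) * t^n := by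
    intro n
    apply ContinuousLinearMap.opNorm_le_bound _
      (mul_nonneg (mul_nonneg hKc ht0.le) (pow_nonneg ht0.le n))
    intro v
    have happ : (Yseq (n+1) - Yseq n) v = Yseq (n+1) v - Yseq n v := by
      simp [ContinuousLinearMap.sub_apply]
    rw [happ]
    have h1' : Real.sqrt c0 * ‖Yseq (n+1) v - Yseq n v‖ ≤ gn (Yseq (n+1) v - Yseq n v) :=
      hgn_low _
    have h2' : gn (Yseq (n+1) v - Yseq n v) ≤ t^(n+1) * gn v := hDgn n v
    have h4' : t^(n+1) * gn v ≤ t^(n+1) * (Real.sqrt C0 * ‖v‖) :=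
      mul_le_mul_of_nonneg_left (hgn_up v) (pow_nonneg ht0.le _)
    have h5' : Real.sqrt c0 * ‖Yseq (n+1) v - Yseq n v‖ ≤ t^(n+1) * (Real.sqrt C0 * ‖v‖) := by
      linarith
    have hc0s : 0 < Real.sqrt c0 := Real.sqrt_pos.mpr hc0
    have h6' : ‖Yseq (n+1) v - Yseq n v‖ ≤ (t^(n+1) * (Real.sqrt C0 * ‖v‖)) / Real.sqrt c0 := by
      rw [le_div_iff₀ hc0s]
      calc ‖Yseq (n+1) v - Yseq n v‖ * Real.sqrt c0
          = Real.sqrt c0 * ‖Yseq (n+1) v - Yseq n v‖ := by ring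
      _ ≤ t^(n+1) * (Real.sqrt C0 * ‖v‖) := h5'
    calc ‖Yseq (n+1) v - Yseq n v‖ ≤ (t^(n+1) * (Real.sqrt C0 * ‖v‖)) / Real.sqrt c0 := h6'
    _ = (Kc * t) * t^n * ‖v‖ := by rw [hKcdef, pow_succ]; ring
  have hcau : CauchySeq Yseq :=
    cauchySeq_of_le_geometric t (Kc*t) ht1 (fun n => by
      rw [dist_eq_norm, norm_sub_rev]; exact hDnorm n)
  obtain ⟨Y, hYlim⟩ := cauchySeq_tendsto_of_complete hcau
  have happly : ∀ v, Tendsto (fun n => Yseq n v) atTop (𝓝 (Y v)) := by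
    intro v
    exact (((ContinuousLinearMap.apply ℝ H v).continuous).tendsto Y).comp hYlim
  -- properties of the limit
  have hYsaL : ∀ v w, G (Y v) w = G v (Y w) := by
    intro v w
    have l1 : Tendsto (fun n => G (Yseq n v) w) atTop (𝓝 (G (Y v) w)) :=
      (((G.flip w).continuous).tendsto (Y v)).comp (happly v)
    have l2 : Tendsto (fun n => G v (Yseq n w)) atTop (𝓝 (G v (Y w))) :=
      (((G v).continuous).tendsto (Y w)).comp (happly w)
    have heq : (fun n => G (Yseq n v) w) = fun n => G v (Yseq n w) := by
      funext n; exact hYsa n v w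
    rw [heq] at l1
    exact tendsto_nhds_unique l1 l2
  have hYgnL : ∀ v, gn (Y v) ≤ t * gn v := by
    intro v
    have h1 : Continuous fun x : H => G x x :=
      (ContinuousLinearMap.continuous₂ G).comp (continuous_id.prodMk continuous_id)
    have hgcont : Continuous gn := by
      rw [hgndef]; exact Real.continuous_sqrt.comp h1
    have hl : Tendsto (fun n => gn (Yseq n v)) atTop (𝓝 (gn (Y v))) :=
      (hgcont.tendsto _).comp (happly v)
    exact le_of_tendsto hl (Eventually.of_forall (fun n => hYgn n v))
  have hYcommL : ∀ B : H →L[ℝ] H, B * T = T * B → B * Y = Y * B := by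
    intro B hB
    have l1 : Tendsto (fun n => B * Yseq n) atTop (𝓝 (B * Y)) :=
      ((continuous_const.mul continuous_id).tendsto Y).comp hYlim
    have l2 : Tendsto (fun n => Yseq n * B) atTop (𝓝 (Y * B)) :=
      ((continuous_id.mul continuous_const).tendsto Y).comp hYlim
    have heq : (fun n => B * Yseq n) = fun n => Yseq n * B := funext fun n => hYcommT n B hB
    rw [heq] at l1
    exact tendsto_nhds_unique l1 l2
  have hYfix : Y = (2:ℝ)⁻¹ • (S + Y * Y) := by
    have l1 : Tendsto (fun n => Yseq (n+1)) atTop (𝓝 Y) :=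
      hYlim.comp (tendsto_add_atTop_nat 1)
    have hPc : Continuous fun Z : H →L[ℝ] H => (2:ℝ)⁻¹ • (S + Z * Z) :=
      by fun_prop
    have l2 : Tendsto (fun n => (2:ℝ)⁻¹ • (S + Yseq n * Yseq n)) atTop
        (𝓝 ((2:ℝ)⁻¹ • (S + Y*Y))) := (hPc.tendsto Y).comp hYlim
    have heq : (fun n => Yseq (n+1)) = fun n => (2:ℝ)⁻¹ • (S + Yseq n * Yseq n) :=
      funext hYsucc
    rw [heq] at l1
    exact tendsto_nhds_unique l1 l2
  -- the square root Q
  set Q : H →L[ℝ] H := 1 - Y with hQdef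
  have hQapp : ∀ v, Q v = v - Y v := by
    intro v; rw [hQdef]
    simp [ContinuousLinearMap.sub_apply, ContinuousLinearMap.one_apply]
  clear_value Q
  have h2Y : (2:ℝ) • Y = S + Y * Y := by
    conv_lhs => rw [hYfix]
    rw [smul_smul]
    norm_num
  have hQQ : Q * Q = M⁻¹ • T := by
    have hexp : Q * Q = 1 - (2:ℝ) • Y + Y * Y := by
      rw [hQdef]
      simp only [mul_sub, sub_mul, mul_one, one_mul, two_smul]
      abel
    rw [hexp, h2Y, hSdef]
    abel
  have hQQv : ∀ v, Q (Q v) = M⁻¹ • T v := by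
    intro v
    have h := ContinuousLinearMap.ext_iff.mp hQQ v
    simpa [ContinuousLinearMap.mul_apply, ContinuousLinearMap.smul_apply] using h
  have hQsa : ∀ v w, G (Q v) w = G v (Q w) := by
    intro v w
    rw [hQapp, hQapp]
    simp only [map_sub, ContinuousLinearMap.sub_apply]
    rw [hYsaL]
  have hQcomm : ∀ B : H →L[ℝ] H, B * T = T * B → B * Q = Q * B := by
    intro B hB
    rw [hQdef, mul_sub, sub_mul, mul_one, one_mul, hYcommL B hB]
  have hQT : Q * T = T * Q := (hQcomm T rfl).symm
  have hQTv : ∀ x, Q (T x) = T (Q x) := by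
    intro x
    have h := ContinuousLinearMap.ext_iff.mp hQT x
    simpa [ContinuousLinearMap.mul_apply] using h
  have hQTiv : ∀ v, Q (Ti v) = Ti (Q v) := by
    intro v
    have h1 : Q (T (Ti v)) = T (Q (Ti v)) := hQTv (Ti v)
    rw [hTTiv v] at h1
    have h2 : Ti (T (Q (Ti v))) = Q (Ti v) := hTiTv _
    rw [← h1] at h2
    exact h2.symm
  -- the inverse of Q
  set Qi : H →L[ℝ] H := M • (Q * Ti) with hQidef
  have hQiapp : ∀ v, Qi v = M • Q (Ti v) := by
    intro v; rw [hQidef]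
    simp [ContinuousLinearMap.smul_apply, ContinuousLinearMap.mul_apply]
  clear_value Qi
  have hQQiv : ∀ v, Q (Qi v) = v := by
    intro v
    rw [hQiapp, map_smul, hQQv, hTTiv, smul_smul, mul_inv_cancel₀ hMne, one_smul]
  have hQiQv : ∀ v, Qi (Q v) = v := by
    intro v
    rw [hQiapp, ← hQTiv, hQQv, hTTiv, smul_smul, mul_inv_cancel₀ hMne, one_smul]
  -- positivity of Q and Qi
  have hQlow : ∀ v, (1 - t) * G v v ≤ G v (Q v) := by
    intro v
    have hexpand : G v (Q v) = G v v - G v (Y v) := by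
      rw [hQapp]; exact map_sub (G v) v (Y v)
    rw [hexpand]
    have h1' : G v (Y v) ≤ gn v * gn (Y v) := hgn_cs v (Y v)
    have h2' : gn v * gn (Y v) ≤ gn v * (t * gn v) :=
      mul_le_mul_of_nonneg_left (hYgnL v) (hgn_nn v)
    have h3' : gn v * (t * gn v) = t * (gn v * gn v) := by ring
    have h4' : gn v * gn v = G v v := by rw [← hgn_sq v]; ring
    have h5' : t * (gn v * gn v) = t * G v v := by rw [h4']
    linarith
  have hTisa : ∀ v w, G (Ti v) w = G v (Ti w) := by
    intro v w
    conv_lhs => rw [← hTTiv w]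
    rw [← hTsa, hTTiv]
  have hQisa : ∀ v w, G (Qi v) w = G v (Qi w) := by
    intro v w
    rw [hQiapp, hQiapp]
    simp only [map_smul, ContinuousLinearMap.smul_apply, smul_eq_mul]
    rw [hQsa, hTisa, ← hQTiv]
  have hQipos : ∀ v, 0 ≤ G v (Qi v) := by
    intro v
    have h0' : 0 ≤ (1 - t) * G (Qi v) (Qi v) := mul_nonneg (by linarith) (hGnn _)
    have h1' : (1 - t) * G (Qi v) (Qi v) ≤ G (Qi v) (Q (Qi v)) := hQlow (Qi v)
    rw [hQQiv v] at h1'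
    calc (0:ℝ) ≤ G (Qi v) v := le_trans h0' h1'
    _ = G v (Qi v) := hGsym _ _
  -- interplay of G with J0
  have hGJ0 : ∀ x y, G (J0 x) (J0 y) = G x y := by
    intro x y
    rw [hGapp, hGapp]
    exact hωJ0 x (J0 y)
  have hGJ0skew : ∀ x y, G (J0 x) y = -G x (J0 y) := by
    intro x y
    have h := hGJ0 x (J0 y)
    rw [hJ0J0 y] at h
    rw [map_neg] at h
    linarith
  -- the conjugated operator cQ
  set cQ : H →L[ℝ] H := -(J0 * (Q * J0)) with hcQdef
  have hcQapp : ∀ v, cQ v = -(J0 (Q (J0 v))) := by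
    intro v; rw [hcQdef]
    simp [ContinuousLinearMap.mul_apply]
  clear_value cQ
  have hcQT : cQ * T = T * cQ := by
    ext v
    simp only [ContinuousLinearMap.mul_apply]
    rw [hcQapp, hcQapp, map_neg]
    congr 1
    rw [hTJ0v, ← hQTiv, hTiJ0v, hJ0Tv]
  have hcQQ : cQ * Q = Q * cQ := hQcomm cQ hcQT
  have hcQQv : ∀ v, cQ (Q v) = Q (cQ v) := by
    intro v
    have h := ContinuousLinearMap.ext_iff.mp hcQQ v
    simpa [ContinuousLinearMap.mul_apply] using h
  have hcQTv : ∀ v, cQ (T v) = T (cQ v) := by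
    intro v
    have h := ContinuousLinearMap.ext_iff.mp hcQT v
    simpa [ContinuousLinearMap.mul_apply] using h
  have hcQTiv : ∀ v, cQ (Ti v) = Ti (cQ v) := by
    intro v
    have h1 := hcQTv (Ti v)
    rw [hTTiv] at h1
    have h2 := hTiTv (cQ (Ti v))
    rw [← h1] at h2
    exact h2.symm
  have hcQQiv : ∀ v, cQ (Qi v) = Qi (cQ v) := by
    intro v
    rw [hQiapp, hQiapp, map_smul]
    congr 1
    rw [hcQQv, hcQTiv]
  -- selfadjointness and positivity of cQ
  have hcQsa : ∀ v w, G (cQ v) w = G v (cQ w) := by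
    intro v w
    have e1 : G (J0 (Q (J0 v))) w = - G (Q (J0 v)) (J0 w) := hGJ0skew _ _
    have e2 : G (Q (J0 v)) (J0 w) = G (J0 v) (Q (J0 w)) := hQsa _ _
    have e3 : G (J0 v) (Q (J0 w)) = - G v (J0 (Q (J0 w))) := hGJ0skew _ _
    rw [hcQapp, hcQapp]
    simp only [map_neg, ContinuousLinearMap.neg_apply]
    linarith
  have hcQpos : ∀ v, (1 - t) * G v v ≤ G v (cQ v) := by
    intro v
    rw [hcQapp, map_neg]
    have e3 : G (J0 v) (Q (J0 v)) = - G v (J0 (Q (J0 v))) := hGJ0skew _ _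
    have e4 : (1-t) * G (J0 v) (J0 v) ≤ G (J0 v) (Q (J0 v)) := hQlow (J0 v)
    rw [hGJ0] at e4
    linarith
  -- squares
  have hcQcQ : ∀ v, cQ (cQ v) = M⁻¹ • Ti v := by
    intro v
    have step1 : cQ (cQ v) = J0 (Q (J0 (J0 (Q (J0 v))))) := by
      rw [hcQapp v, map_neg, hcQapp, neg_neg]
    rw [step1, hJ0J0 (Q (J0 v)), map_neg, map_neg, hQQv, map_smul, hTJ0v, hJ0J0,
      smul_neg, neg_neg]
  have hQiQi : ∀ v, Qi (Qi v) = M • Ti v := by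
    intro v
    rw [hQiapp v, map_smul, hQiapp, ← hQTiv, hQQv, hTTiv, smul_smul, smul_smul]
    congr 1
    field_simp
  -- the operator X = cQ + M⁻¹ • Qi kills the difference cQ - M⁻¹ • Qi
  have hXD : ∀ v, cQ (cQ v - M⁻¹ • Qi v) + M⁻¹ • Qi (cQ v - M⁻¹ • Qi v) = 0 := by
    intro v
    have e0 : cQ (cQ v) = M⁻¹ • Ti v := hcQcQ v
    have e1 : cQ (M⁻¹ • Qi v) = M⁻¹ • Qi (cQ v) := by
      rw [map_smul, hcQQiv]
    have e2 : Qi (M⁻¹ • Qi v) = Ti v := by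
      rw [map_smul, hQiQi, smul_smul, inv_mul_cancel₀ hMne, one_smul]
    rw [map_sub, map_sub, e0, e1, e2, smul_sub]
    abel
  -- conclude cQ = M⁻¹ • Qi
  have hkeyv : ∀ v, cQ v = M⁻¹ • Qi v := by
    intro v
    set d : H := cQ v - M⁻¹ • Qi v with hddef
    have h1 : cQ d + M⁻¹ • Qi d = 0 := hXD v
    clear_value d
    have h2 : G d (cQ d) + M⁻¹ * G d (Qi d) = 0 := by
      have h3 := congrArg (fun x => G d x) h1
      simpa [map_add, map_smul, smul_eq_mul] using h3
    have h4 : (1 - t) * G d d ≤ G d (cQ d) := hcQpos d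
    have h5 : 0 ≤ M⁻¹ * G d (Qi d) := mul_nonneg hMi.le (hQipos d)
    have h6 : (1 - t) * G d d ≤ 0 := by linarith
    have h7 : 0 ≤ G d d := hGnn d
    have h1t : (0:ℝ) < 1 - t := by linarith
    have h8' : G d d ≤ 0 := le_of_mul_le_mul_left (by rw [mul_zero]; exact h6) h1t
    have h8 : G d d = 0 := le_antisymm h8' h7
    have h9 : c0 * ‖d‖^2 ≤ 0 := by
      have := hGlow d
      linarith
    have h9' : ‖d‖^2 ≤ 0 := le_of_mul_le_mul_left (by rw [mul_zero]; exact h9) hc0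
    have h9'' : ‖d‖^2 = 0 := le_antisymm h9' (sq_nonneg _)
    have h10 : ‖d‖ = 0 := by
      exact pow_eq_zero_iff (by norm_num) |>.mp h9''
    have h11 : d = 0 := norm_eq_zero.mp h10
    have h12 : cQ v - M⁻¹ • Qi v = 0 := hddef.symm.trans h11
    exact sub_eq_zero.mp h12
  -- assembling the symplectomorphism
  set β : ℝ := Real.sqrt M with hβdef
  have hβ0 : 0 < β := by rw [hβdef]; exact Real.sqrt_pos.mpr hM0
  have hββ : β * β = M := by rw [hβdef]; exact Real.mul_self_sqrt hM0.le
  clear_value β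
  have hβne : β ≠ 0 := ne_of_gt hβ0
  have hJ0Qiv : ∀ v, J0 (Qi v) = M • Q (J0 v) := by
    intro v
    have h := hkeyv v
    rw [hcQapp] at h
    have h2 := congrArg (fun x => J0 x) h
    simp only [map_neg, map_smul, hJ0J0, neg_neg] at h2
    have h3 := congrArg (fun x : H => M • x) h2
    simp only [smul_smul, mul_inv_cancel₀ hMne, one_smul] at h3
    exact h3.symm
  have hQiJ0v : ∀ v, Qi (J0 v) = M • J0 (Q v) := by
    intro v
    have h := hkeyv (J0 v)
    rw [hcQapp, hJ0J0, map_neg, map_neg, neg_neg] at h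
    have h3 := congrArg (fun x : H => M • x) h
    simp only [smul_smul, mul_inv_cancel₀ hMne, one_smul] at h3
    exact h3.symm
  have hTQiv : ∀ v, T (Qi v) = M • Q v := by
    intro v
    rw [hQiapp, map_smul, ← hQTv, hTTiv]
  have hA1 : ∀ x : H, (β • Q) ((β⁻¹ • Qi) x) = x := by
    intro x
    simp only [ContinuousLinearMap.smul_apply]
    rw [map_smul, hQQiv, smul_smul, mul_inv_cancel₀ hβne, one_smul]
  have hA2 : ∀ x : H, (β⁻¹ • Qi) ((β • Q) x) = x := by
    intro x
    simp only [ContinuousLinearMap.smul_apply]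
    rw [map_smul, hQiQv, smul_smul, inv_mul_cancel₀ hβne, one_smul]
  set A : H ≃L[ℝ] H := ContinuousLinearEquiv.equivOfInverse (β⁻¹ • Qi) (β • Q) hA1 hA2
    with hAdef
  have hAv : ∀ v, A v = β⁻¹ • Qi v := by
    intro v
    rw [hAdef]
    rw [ContinuousLinearEquiv.equivOfInverse_apply]
    simp [ContinuousLinearMap.smul_apply]
  refine ⟨A, ?_, ?_⟩
  · intro v w
    have hωG : ∀ a b : H, ω a b = - G a (J0 b) := by
      intro a b
      rw [hGapp, hJ0J0, map_neg, neg_neg]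
    rw [hωG (A v) (A w), hωG v w]
    have e1 : J0 (A w) = β • Q (J0 w) := by
      rw [hAv, map_smul, hJ0Qiv, smul_smul]
      congr 1
      rw [← hββ, ← mul_assoc, inv_mul_cancel₀ hβne, one_mul]
    have e2 : G (A v) (J0 (A w)) = G v (J0 w) := by
      rw [hAv, e1]
      simp only [map_smul, ContinuousLinearMap.smul_apply, smul_eq_mul]
      rw [← hQsa, hQQiv, ← mul_assoc, mul_inv_cancel₀ hβne, one_mul]
    rw [e2]
  · intro v
    rw [hAv, hAv, hQiJ0v, map_smul]
    congr 1
    rw [← hJ0Tv, hTQiv, map_smul]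
end
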